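/- arXiv:1407.1960 — 7 statements merged into one kernel-verified Lean document; each statement's English description precedes it below -/
import Mathlib

section
/- For a positive integer m, an integer r with 0 ≤ r ≤ m, an integer s ≥ 0 with r + s ≤ m, and commuting indeterminates q, z_1, ..., z_m, one has ∑_{1≤b_1<⋯<b_{r+s}≤m} q^{b_1+⋯+b_{r+s}} e_s(z_{b_1}, q z_{b_2}, ..., q^{r+s-1} z_{b_{r+s}}) = q^{s(s-1)/2} e_r(q^{s+1}, q^{s+2}, ..., q^m) e_s(q z_1, q^2 z_2, ..., q^m z_m), where e_s denotes the elementary symmetric polynomial of degree s. -/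
open Finset

/-- elementary symmetric polynomial of degree `s` in the variables `w 0, ..., w (n-1)` -/
noncomputable def esymP {R : Type*} [CommRing R] (s n : ℕ) (w : ℕ → R) : R :=
  ∑ t ∈ (Finset.range n).powersetCard s, ∏ i ∈ t, w i

private lemma sort_getD_eq (B : Finset ℕ) {n : ℕ} (h : B.card = n) {i : ℕ} (hi : i < n) :
    (B.sort (· ≤ ·)).getD i 0 = B.orderEmbOfFin h ⟨i, hi⟩ := by
  have hl : i < (B.sort (· ≤ ·)).length := by rw [Finset.length_sort, h]; exact hi
  rw [Finset.orderEmbOfFin_apply, List.getD_eq_getElem _ _ hl]; rfl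

private lemma exists_orderEmb (B : Finset ℕ) {n} (h : B.card = n) {x} (hx : x ∈ B) :
    ∃ i : Fin n, B.orderEmbOfFin h i = x := by
  have h1 := B.range_orderEmbOfFin h
  have : x ∈ Set.range (B.orderEmbOfFin h) := by rw [h1]; exact hx
  exact this

private lemma g_mem (B : Finset ℕ) {n} (h : B.card = n) {i : ℕ} (hi : i < n) :
    (B.sort (· ≤ ·)).getD i 0 ∈ B := by
  rw [sort_getD_eq B h hi]; exact Finset.orderEmbOfFin_mem B h _

private lemma g_injOn (B : Finset ℕ) {n} (h : B.card = n) {a b : ℕ}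
    (ha : a < n) (hb : b < n)
    (hab : (B.sort (· ≤ ·)).getD a 0 = (B.sort (· ≤ ·)).getD b 0) : a = b := by
  rw [sort_getD_eq B h ha, sort_getD_eq B h hb] at hab
  have := (B.orderEmbOfFin h).injective hab
  simpa using this

private lemma g_surj (B : Finset ℕ) {n} (h : B.card = n) {x} (hx : x ∈ B) :
    ∃ i, i < n ∧ (B.sort (· ≤ ·)).getD i 0 = x := by
  obtain ⟨i, hi⟩ := exists_orderEmb B h hx
  exact ⟨i.1, i.2, by rw [sort_getD_eq B h i.2]; exact hi⟩
/-- number of elements of `B` below the `i`-th element of `B` is `i` -/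
private lemma pos_orderEmb (B : Finset ℕ) {n : ℕ} (h : B.card = n) (i : Fin n) :
    (B.filter (· < B.orderEmbOfFin h i)).card = i := by
  set e := B.orderEmbOfFin h with he
  have himg : B.filter (· < e i) = (univ.filter (fun j : Fin n => j < i)).image e := by
    ext x
    simp only [mem_filter, mem_image, mem_univ, true_and]
    constructor
    · rintro ⟨hxB, hxlt⟩
      obtain ⟨j, rfl⟩ := exists_orderEmb B h hxB
      exact ⟨j, e.lt_iff_lt.mp hxlt, rfl⟩
    · rintro ⟨j, hj, rfl⟩
      exact ⟨Finset.orderEmbOfFin_mem B h j, e.lt_iff_lt.mpr hj⟩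
  rw [himg, Finset.card_image_of_injective _ e.injective]
  have : ((univ : Finset (Fin n)).filter (fun j => j < i)) = Finset.Iio i := by ext j; simp
  rw [this, Fin.card_Iio]

private lemma inner_esym {R : Type*} [CommRing R] (q : R) (z : ℕ → R) (s : ℕ)
    (B : Finset ℕ) {n : ℕ} (h : B.card = n) :
    esymP s n (fun i => q ^ i * z ((B.sort (· ≤ ·)).getD i 0)) =
    ∑ T ∈ B.powersetCard s, ∏ t ∈ T, q ^ (B.filter (· < t)).card * z t := by
  classical
  unfold esymP
  set g : ℕ → ℕ := fun i => (B.sort (· ≤ ·)).getD i 0 with hg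
  have key : ∀ S ⊆ range n, (S.image g).card = S.card := by
    intro S hS
    apply Finset.card_image_of_injOn
    intro a ha b hb hab
    exact g_injOn B h (mem_range.mp (hS ha)) (mem_range.mp (hS hb)) hab
  have img_filter : ∀ T ⊆ B, ((range n).filter (fun i => g i ∈ T)).image g = T := by
    intro T hT
    ext x
    simp only [mem_image, mem_filter, mem_range]
    constructor
    · rintro ⟨i, ⟨_, hi⟩, rfl⟩; exact hi
    · intro hx
      obtain ⟨i, hi, hgi⟩ := g_surj B h (hT hx)
      exact ⟨i, ⟨hi, by rw [show g i = x from hgi]; exact hx⟩, hgi⟩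
  refine Finset.sum_nbij' (i := fun S => S.image g)
    (j := fun T => (range n).filter (fun i => g i ∈ T)) ?_ ?_ ?_ ?_ ?_
  · intro S hS
    rw [mem_powersetCard] at hS ⊢
    refine ⟨?_, by rw [key S hS.1, hS.2]⟩
    intro x hx
    obtain ⟨i, hi, rfl⟩ := mem_image.mp hx
    exact g_mem B h (mem_range.mp (hS.1 hi))
  · intro T hT
    rw [mem_powersetCard] at hT ⊢
    refine ⟨filter_subset _ _, ?_⟩
    have := key _ (filter_subset (fun i => g i ∈ T) (range n))
    rw [img_filter T hT.1] at this
    rw [← this, hT.2]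
  · intro S hS
    rw [mem_powersetCard] at hS
    ext i
    simp only [mem_filter, mem_range, mem_image]
    constructor
    · rintro ⟨hi, j, hj, hji⟩
      have := g_injOn B h (mem_range.mp (hS.1 hj)) hi hji
      exact this ▸ hj
    · intro hi
      exact ⟨mem_range.mp (hS.1 hi), i, hi, rfl⟩
  · intro T hT
    rw [mem_powersetCard] at hT
    exact img_filter T hT.1
  · intro S hS
    rw [mem_powersetCard] at hS
    rw [Finset.prod_image (fun a ha b hb hab =>
      g_injOn B h (mem_range.mp (hS.1 ha)) (mem_range.mp (hS.1 hb)) hab)]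
    apply Finset.prod_congr rfl
    intro i hi
    have hin : i < n := mem_range.mp (hS.1 hi)
    simp only
    rw [sort_getD_eq B h hin, pos_orderEmb B h ⟨i, hin⟩]

private lemma sum_pos_self (T : Finset ℕ) :
    ∑ t ∈ T, (T.filter (· < t)).card = T.card * (T.card - 1) / 2 := by
  classical
  set n := T.card with hn
  have hinj : ∀ a ∈ range n, ∀ b ∈ range n,
      (T.sort (· ≤ ·)).getD a 0 = (T.sort (· ≤ ·)).getD b 0 → a = b :=
    fun a ha b hb hab => g_injOn T hn.symm (mem_range.mp ha) (mem_range.mp hb) hab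
  have himg : (range n).image (fun i => (T.sort (· ≤ ·)).getD i 0) = T := by
    apply Finset.eq_of_subset_of_card_le
    · intro x hx
      obtain ⟨i, hi, rfl⟩ := mem_image.mp hx
      exact g_mem T hn.symm (mem_range.mp hi)
    · rw [Finset.card_image_of_injOn hinj, card_range]
  calc ∑ t ∈ T, (T.filter (· < t)).card
      = ∑ t ∈ (range n).image (fun i => (T.sort (· ≤ ·)).getD i 0),
          (T.filter (· < t)).card := by rw [himg]
    _ = ∑ i ∈ range n, (T.filter (· < (T.sort (· ≤ ·)).getD i 0)).card :=
        Finset.sum_image hinj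
    _ = ∑ i ∈ range n, i := by
        refine Finset.sum_congr rfl fun i hi => ?_
        rw [sort_getD_eq T hn.symm (mem_range.mp hi), pos_orderEmb T hn.symm]
    _ = n * (n - 1) / 2 := Finset.sum_range_id n

private lemma pair_reindex {R : Type*} [CommRing R] (A : Finset ℕ) (r s : ℕ)
    (f : Finset ℕ → Finset ℕ → R) :
    ∑ B ∈ A.powersetCard (r + s), ∑ T ∈ B.powersetCard s, f B T =
    ∑ T ∈ A.powersetCard s, ∑ T' ∈ (A \ T).powersetCard r, f (T ∪ T') T := by
  classical
  rw [Finset.sum_sigma', Finset.sum_sigma']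
  refine Finset.sum_nbij' (i := fun p => ⟨p.2, p.1 \ p.2⟩)
    (j := fun p => ⟨p.1 ∪ p.2, p.1⟩) ?_ ?_ ?_ ?_ ?_
  · rintro ⟨B, T⟩ hp
    simp only [mem_sigma, mem_powersetCard] at hp ⊢
    obtain ⟨⟨hBA, hBc⟩, hTB, hTc⟩ := hp
    refine ⟨⟨hTB.trans hBA, hTc⟩, ?_, ?_⟩
    · exact sdiff_subset_sdiff hBA le_rfl
    · rw [card_sdiff_of_subset hTB, hBc, hTc]; omega
  · rintro ⟨T, T'⟩ hp
    simp only [mem_sigma, mem_powersetCard] at hp ⊢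
    obtain ⟨⟨hTA, hTc⟩, hT'd, hT'c⟩ := hp
    have hdisj : Disjoint T T' := Finset.disjoint_of_subset_right hT'd disjoint_sdiff
    refine ⟨⟨?_, ?_⟩, subset_union_left, hTc⟩
    · exact union_subset hTA (hT'd.trans sdiff_subset)
    · rw [card_union_of_disjoint hdisj, hTc, hT'c, add_comm]
  · rintro ⟨B, T⟩ hp
    simp only [mem_sigma, mem_powersetCard] at hp
    have : T ∪ B \ T = B := union_sdiff_of_subset hp.2.1
    simp [this]
  · rintro ⟨T, T'⟩ hp
    simp only [mem_sigma, mem_powersetCard] at hp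
    have hdisj : Disjoint T T' := Finset.disjoint_of_subset_right hp.2.1 disjoint_sdiff
    have : (T ∪ T') \ T = T' := union_sdiff_cancel_left hdisj
    simp [this]
  · rintro ⟨B, T⟩ hp
    simp only [mem_sigma, mem_powersetCard] at hp
    have : T ∪ B \ T = B := union_sdiff_of_subset hp.2.1
    simp [this]

/-- Lemma E : double counting -/
private lemma double_count (T T' : Finset ℕ) :
    ∑ t ∈ T, (T'.filter (· < t)).card = ∑ t' ∈ T', (T.filter (fun t => t' < t)).card := by
  simp only [Finset.card_filter]
  rw [Finset.sum_comm]

private lemma card_filter_lt_add_card_filter_gt (T : Finset ℕ) {a : ℕ} (ha : a ∉ T) :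
    (T.filter (· < a)).card + (T.filter (a < ·)).card = T.card := by
  rw [← card_union_of_disjoint]
  · congr 1
    ext t
    simp only [mem_union, mem_filter]
    constructor
    · rintro (⟨h, _⟩ | ⟨h, _⟩) <;> exact h
    · intro ht
      have : t ≠ a := fun h => ha (h ▸ ht)
      rcases lt_or_gt_of_ne this with h | h
      · exact Or.inl ⟨ht, h⟩
      · exact Or.inr ⟨ht, h⟩
  · rw [Finset.disjoint_left]
    intro t h1 h2
    simp only [mem_filter] at h1 h2
    omega

private lemma shift_bij {R : Type*} [CommRing R] (q : R) (m r s : ℕ)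
    (T : Finset ℕ) (hT : T ⊆ Finset.Icc 1 m) (hTs : T.card = s) :
    ∑ T' ∈ ((Finset.Icc 1 m) \ T).powersetCard r,
        q ^ (∑ t' ∈ T', (t' + (T.filter (fun t => t' < t)).card)) =
    ∑ C ∈ (Finset.Icc (s + 1) m).powersetCard r, q ^ (∑ c ∈ C, c) := by
  classical
  set φ : ℕ → ℕ := fun t' => t' + (T.filter (fun t => t' < t)).card with hφ
  set D : Finset ℕ := Finset.Icc 1 m \ T with hD
  have hsm : s ≤ m := by
    have := Finset.card_le_card hT
    rwa [hTs, Nat.card_Icc, Nat.add_sub_cancel] at this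
  -- strict monotonicity on D
  have hmono : ∀ a ∈ D, ∀ b ∈ D, a < b → φ a < φ b := by
    intro a ha b hb hab
    simp only [hD, mem_sdiff] at ha hb
    have hsplit : (T.filter (fun t => a < t)).card =
        (T.filter (fun t => b < t)).card + (T.filter (fun t => a < t ∧ t ≤ b)).card := by
      rw [← card_union_of_disjoint]
      · congr 1
        ext t
        simp only [mem_union, mem_filter]
        constructor
        · rintro ⟨ht, hat⟩
          rcases le_or_gt t b with h' | h'
          · exact Or.inr ⟨ht, hat, h'⟩
          · exact Or.inl ⟨ht, h'⟩
        · rintro (⟨ht, h'⟩ | ⟨ht, h1, h2⟩)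
          · exact ⟨ht, hab.trans h'⟩
          · exact ⟨ht, h1⟩
      · rw [Finset.disjoint_left]
        intro t h1 h2
        simp only [mem_filter] at h1 h2
        omega
    have hmid : (T.filter (fun t => a < t ∧ t ≤ b)).card ≤ b - a - 1 := by
      have hsub : T.filter (fun t => a < t ∧ t ≤ b) ⊆ Finset.Ioo a b := by
        intro t ht
        simp only [mem_filter] at ht
        have : t ≠ b := fun h => hb.2 (h ▸ ht.1)
        rw [Finset.mem_Ioo]
        omega
      have := Finset.card_le_card hsub
      rwa [Nat.card_Ioo] at this
    simp only [hφ]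
    omega
  -- φ maps D into Icc (s+1) m
  have hrange : ∀ a ∈ D, φ a ∈ Finset.Icc (s + 1) m := by
    intro a ha
    simp only [hD, mem_sdiff, Finset.mem_Icc] at ha
    obtain ⟨⟨h1a, ham⟩, haT⟩ := ha
    have hsum := card_filter_lt_add_card_filter_gt T haT
    have hlt : (T.filter (· < a)).card ≤ a - 1 := by
      have hsub : T.filter (· < a) ⊆ Finset.Icc 1 (a - 1) := by
        intro t ht
        simp only [mem_filter] at ht
        have := Finset.mem_Icc.mp (hT ht.1)
        rw [Finset.mem_Icc]
        omega
      have := Finset.card_le_card hsub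
      rwa [Nat.card_Icc, Nat.add_sub_cancel] at this
    have hgt : (T.filter (a < ·)).card ≤ m - a := by
      have hsub : T.filter (a < ·) ⊆ Finset.Ioc a m := by
        intro t ht
        simp only [mem_filter] at ht
        have := Finset.mem_Icc.mp (hT ht.1)
        rw [Finset.mem_Ioc]
        omega
      have := Finset.card_le_card hsub
      rwa [Nat.card_Ioc] at this
    simp only [hφ, Finset.mem_Icc]
    omega
  have hinjOn : ∀ a ∈ D, ∀ b ∈ D, φ a = φ b → a = b := by
    intro a ha b hb hab
    by_contra hne
    rcases lt_or_gt_of_ne hne with h | h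
    · exact absurd hab (Nat.ne_of_lt (hmono a ha b hb h))
    · exact absurd hab.symm (Nat.ne_of_lt (hmono b hb a ha h))
  have hDcard : D.card = m - s := by
    rw [hD, card_sdiff_of_subset hT, Nat.card_Icc, hTs]; omega
  have himg : D.image φ = Finset.Icc (s + 1) m := by
    apply Finset.eq_of_subset_of_card_le
    · intro x hx
      obtain ⟨a, ha, rfl⟩ := mem_image.mp hx
      exact hrange a ha
    · rw [Finset.card_image_of_injOn hinjOn, hDcard, Nat.card_Icc]
      omega
  refine Finset.sum_bij (fun T' _ => T'.image φ) ?_ ?_ ?_ ?_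
  · intro T' hT'
    rw [mem_powersetCard] at hT' ⊢
    constructor
    · intro x hx
      obtain ⟨a, ha, rfl⟩ := mem_image.mp hx
      rw [← himg]
      exact mem_image_of_mem φ (hT'.1 ha)
    · rw [Finset.card_image_of_injOn (fun a ha b hb => hinjOn a (hT'.1 ha) b (hT'.1 hb)),
        hT'.2]
  · intro T1 h1 T2 h2 heq
    have heq' : T1.image φ = T2.image φ := heq
    rw [mem_powersetCard] at h1 h2
    ext x
    constructor
    · intro hx
      have : φ x ∈ T2.image φ := heq' ▸ mem_image_of_mem φ hx
      obtain ⟨y, hy, hxy⟩ := mem_image.mp this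
      rwa [← hinjOn y (h2.1 hy) x (h1.1 hx) hxy]
    · intro hx
      have : φ x ∈ T1.image φ := heq'.symm ▸ mem_image_of_mem φ hx
      obtain ⟨y, hy, hxy⟩ := mem_image.mp this
      rwa [← hinjOn y (h1.1 hy) x (h2.1 hx) hxy]
  · intro C hC
    rw [mem_powersetCard] at hC
    refine ⟨D.filter (fun a => φ a ∈ C), ?_, ?_⟩
    · have himgF : (D.filter (fun a => φ a ∈ C)).image φ = C := by
        apply Finset.Subset.antisymm
        · intro x hx
          obtain ⟨a, ha, rfl⟩ := mem_image.mp hx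
          exact (mem_filter.mp ha).2
        · intro c hc
          have : c ∈ D.image φ := himg ▸ hC.1 hc
          obtain ⟨a, ha, rfl⟩ := mem_image.mp this
          exact mem_image_of_mem φ (mem_filter.mpr ⟨ha, hc⟩)
      rw [mem_powersetCard]
      refine ⟨filter_subset _ _, ?_⟩
      have hc2 := Finset.card_image_of_injOn
        (fun a ha b hb => hinjOn a (filter_subset (fun a => φ a ∈ C) D ha)
          b (filter_subset (fun a => φ a ∈ C) D hb))
      rw [himgF, hC.2] at hc2
      exact hc2.symm
    · apply Finset.Subset.antisymm
      · intro x hx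
        obtain ⟨a, ha, rfl⟩ := mem_image.mp hx
        exact (mem_filter.mp ha).2
      · intro c hc
        have : c ∈ D.image φ := himg ▸ hC.1 hc
        obtain ⟨a, ha, rfl⟩ := mem_image.mp this
        exact mem_image_of_mem φ (mem_filter.mpr ⟨ha, hc⟩)
  · intro T' hT'
    rw [mem_powersetCard] at hT'
    congr 1
    rw [Finset.sum_image (fun a ha b hb => hinjOn a (hT'.1 ha) b (hT'.1 hb))]

/-- for 0 ≤ r, 0 ≤ s, r + s ≤ m, m ≥ 1,
∑_{1≤b_1<⋯<b_{r+s}≤m} q^{b_1+⋯+b_{r+s}} e_s(z_{b_1}, q z_{b_2}, ..., q^{r+s-1} z_{b_{r+s}})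
 = q^{s(s-1)/2} e_r(q^{s+1},...,q^m) e_s(q z_1,...,q^m z_m). -/
theorem stmt0 {R : Type*} [CommRing R] (q : R) (z : ℕ → R) (m r s : ℕ)
    (hm : 0 < m) (hrs : r + s ≤ m) :
    ∑ B ∈ (Finset.Icc 1 m).powersetCard (r + s),
      q ^ (∑ b ∈ B, b) *
        esymP s (r + s) (fun i => q ^ i * z ((B.sort (· ≤ ·)).getD i 0)) =
    q ^ (s * (s - 1) / 2) *
      (∑ T ∈ (Finset.Icc (s + 1) m).powersetCard r, ∏ i ∈ T, q ^ i) *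
      (∑ T ∈ (Finset.Icc 1 m).powersetCard s, ∏ i ∈ T, q ^ i * z i) := by
  classical
  have step1 : ∑ B ∈ (Finset.Icc 1 m).powersetCard (r + s),
      q ^ (∑ b ∈ B, b) *
        esymP s (r + s) (fun i => q ^ i * z ((B.sort (· ≤ ·)).getD i 0)) =
      ∑ B ∈ (Finset.Icc 1 m).powersetCard (r + s), ∑ T ∈ B.powersetCard s,
        (q ^ (∑ b ∈ B, b) * ∏ t ∈ T, q ^ (B.filter (· < t)).card * z t) := by
    refine Finset.sum_congr rfl fun B hB => ?_
    rw [mem_powersetCard] at hB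
    rw [inner_esym q z s B hB.2, Finset.mul_sum]
  rw [step1, pair_reindex]
  have inner_eq : ∀ T ∈ (Finset.Icc 1 m).powersetCard s,
      ∀ T' ∈ ((Finset.Icc 1 m) \ T).powersetCard r,
      q ^ (∑ b ∈ T ∪ T', b) * ∏ t ∈ T, q ^ ((T ∪ T').filter (· < t)).card * z t =
      q ^ (s * (s - 1) / 2) *
        q ^ (∑ t' ∈ T', (t' + (T.filter (fun t => t' < t)).card)) *
        ∏ t ∈ T, (q ^ t * z t) := by
    intro T hT T' hT'
    rw [mem_powersetCard] at hT hT'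
    have hdisj : Disjoint T T' := Finset.disjoint_of_subset_right hT'.1 disjoint_sdiff
    have hfil : ∀ t : ℕ, ((T ∪ T').filter (· < t)).card =
        (T.filter (· < t)).card + (T'.filter (· < t)).card := by
      intro t
      rw [Finset.filter_union, card_union_of_disjoint (disjoint_filter_filter hdisj)]
    have hprod : ∏ t ∈ T, q ^ ((T ∪ T').filter (· < t)).card * z t =
        q ^ (∑ t ∈ T, (T.filter (· < t)).card) *
        q ^ (∑ t ∈ T, (T'.filter (· < t)).card) * ∏ t ∈ T, z t := by
      rw [← Finset.prod_pow_eq_pow_sum, ← Finset.prod_pow_eq_pow_sum,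
        ← Finset.prod_mul_distrib, ← Finset.prod_mul_distrib]
      refine Finset.prod_congr rfl fun t _ => ?_
      rw [hfil t, pow_add]
    rw [hprod, Finset.sum_union hdisj, sum_pos_self T, hT.2, double_count T T',
      Finset.sum_add_distrib, Finset.prod_mul_distrib, Finset.prod_pow_eq_pow_sum,
      pow_add, pow_add]
    ring
  calc ∑ T ∈ (Finset.Icc 1 m).powersetCard s, ∑ T' ∈ ((Finset.Icc 1 m) \ T).powersetCard r,
        q ^ (∑ b ∈ T ∪ T', b) * ∏ t ∈ T, q ^ ((T ∪ T').filter (· < t)).card * z t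
      = ∑ T ∈ (Finset.Icc 1 m).powersetCard s,
          q ^ (s * (s - 1) / 2) *
          (∑ T' ∈ ((Finset.Icc 1 m) \ T).powersetCard r,
            q ^ (∑ t' ∈ T', (t' + (T.filter (fun t => t' < t)).card))) *
          ∏ t ∈ T, (q ^ t * z t) := by
        refine Finset.sum_congr rfl fun T hT => ?_
        rw [Finset.mul_sum, Finset.sum_mul]
        refine Finset.sum_congr rfl fun T' hT' => ?_
        exact inner_eq T hT T' hT'
    _ = ∑ T ∈ (Finset.Icc 1 m).powersetCard s,
          q ^ (s * (s - 1) / 2) *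
          (∑ C ∈ (Finset.Icc (s + 1) m).powersetCard r, q ^ (∑ c ∈ C, c)) *
          ∏ t ∈ T, (q ^ t * z t) := by
        refine Finset.sum_congr rfl fun T hT => ?_
        rw [mem_powersetCard] at hT
        rw [shift_bij q m r s T hT.1 hT.2]
    _ = q ^ (s * (s - 1) / 2) *
        (∑ T ∈ (Finset.Icc (s + 1) m).powersetCard r, ∏ i ∈ T, q ^ i) *
        (∑ T ∈ (Finset.Icc 1 m).powersetCard s, ∏ i ∈ T, q ^ i * z i) := by
        rw [← Finset.mul_sum]
        congr 2
        exact Finset.sum_congr rfl fun C _ => (Finset.prod_pow_eq_pow_sum C _ q).symm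
end

section
/- For a positive integer m and indeterminates x, y, q, define K_m(x,y) := ∑_{r=1}^{m} ([r-1]! ((q-1)x - y)^{r-1} q^{-mr} / ∏_{a=1}^{r}(x + [a-1]y)) · e_r(q, q^2, ..., q^m). Then K_m(x,y) = ∑_{a=0}^{m-1} 1/(x + [a]y). -/
noncomputable section

/-- the field of rational functions in the indeterminates `x, y, q` over ℚ -/
abbrev K3 : Type := FractionRing (MvPolynomial (Fin 3) ℚ)

def xv : K3 := algebraMap (MvPolynomial (Fin 3) ℚ) K3 (MvPolynomial.X 0)
def yv : K3 := algebraMap (MvPolynomial (Fin 3) ℚ) K3 (MvPolynomial.X 1)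
def qv : K3 := algebraMap (MvPolynomial (Fin 3) ℚ) K3 (MvPolynomial.X 2)

/-- the q-integer [n] = (1 - q^n)/(1 - q) -/
def qint (n : ℕ) : K3 := (1 - qv ^ n) / (1 - qv)

/-- the q-factorial [k]! with [0]! = 1 -/
def qfact (k : ℕ) : K3 := ∏ a ∈ Finset.range k, qint (a + 1)

/-- K_m(x,y) := ∑_{r=1}^{m} ([r-1]! ((q-1)x-y)^{r-1} q^{-mr} / ∏_{a=1}^{r}(x+[a-1]y))
      · e_r(q, q², ..., q^m) -/
def Kfun (m : ℕ) (x y : K3) : K3 :=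
  ∑ r ∈ Finset.Icc 1 m,
    (qfact (r - 1) * ((qv - 1) * x - y) ^ (r - 1) * (qv ^ (m * r))⁻¹ /
        ∏ a ∈ Finset.Icc 1 r, (x + qint (a - 1) * y)) *
      ∑ T ∈ (Finset.Icc 1 m).powersetCard r, ∏ i ∈ T, qv ^ i

lemma algebraMap_ne_zero_of_eval (p : MvPolynomial (Fin 3) ℚ) (v : Fin 3 → ℚ)
    (h : MvPolynomial.eval v p ≠ 0) :
    algebraMap (MvPolynomial (Fin 3) ℚ) K3 p ≠ 0 := by
  intro hz
  apply h
  have hp : p = 0 := IsFractionRing.injective (MvPolynomial (Fin 3) ℚ) K3 (by simpa using hz)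
  simp [hp]

lemma qv_ne : qv ≠ 0 :=
  algebraMap_ne_zero_of_eval _ ![0,0,1] (by simp)

lemma one_sub_qv_ne : (1 : K3) - qv ≠ 0 := by
  have h : (1 : K3) - qv = algebraMap (MvPolynomial (Fin 3) ℚ) K3 (1 - MvPolynomial.X 2) := by
    simp [qv, map_sub]
  rw [h]
  exact algebraMap_ne_zero_of_eval _ ![0,0,0] (by simp)

lemma qint_eq (n : ℕ) : qint n = ∑ i ∈ Finset.range n, qv ^ i := by
  rw [qint, div_eq_iff one_sub_qv_ne]
  linear_combination geom_sum_mul qv n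

lemma qint_zero : qint 0 = 0 := by simp [qint]

lemma qint_succ (n : ℕ) : qint (n + 1) = 1 + qv * qint n := by
  rw [qint_eq, qint_eq, geom_sum_succ]
  ring

lemma qpow_eq (r : ℕ) : qv ^ r = 1 + (qv - 1) * qint r := by
  rw [qint_eq]
  linear_combination -(geom_sum_mul qv r)

lemma hne (n : ℕ) : xv + qint n * yv ≠ 0 := by
  have h : xv + qint n * yv = algebraMap (MvPolynomial (Fin 3) ℚ) K3
      (MvPolynomial.X 0 + (∑ i ∈ Finset.range n, MvPolynomial.X 2 ^ i) * MvPolynomial.X 1) := by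
    rw [qint_eq]
    simp [xv, yv, qv, map_add, map_mul, map_sum, map_pow]
  rw [h]
  refine algebraMap_ne_zero_of_eval _ ![1,0,0] ?_
  simp

def Ee (m r : ℕ) : K3 := ∑ T ∈ (Finset.Icc 1 m).powersetCard r, ∏ i ∈ T, qv ^ i

lemma Ee_zero (m : ℕ) : Ee m 0 = 1 := by simp [Ee]

lemma Ee_top {m r : ℕ} (h : m < r) : Ee m r = 0 := by
  rw [Ee, Finset.powersetCard_eq_empty.mpr (by simpa using h), Finset.sum_empty]

lemma Icc_insert (m : ℕ) : Finset.Icc 1 (m + 1) = insert (m + 1) (Finset.Icc 1 m) := by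
  ext t
  simp only [Finset.mem_Icc, Finset.mem_insert]
  omega

lemma Ee_succ (m r : ℕ) : Ee (m + 1) (r + 1) = Ee m (r + 1) + qv ^ (m + 1) * Ee m r := by
  have hnot : (m + 1) ∉ Finset.Icc 1 m := by simp
  have hdisj : Disjoint ((Finset.Icc 1 m).powersetCard (r + 1))
      (((Finset.Icc 1 m).powersetCard r).image (insert (m + 1))) := by
    rw [Finset.disjoint_left]
    intro T hT hT'
    obtain ⟨t, _, rfl⟩ := Finset.mem_image.mp hT'
    have hsub := (Finset.mem_powersetCard.mp hT).1
    exact hnot (hsub (Finset.mem_insert_self _ _))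
  simp only [Ee]
  rw [Icc_insert, Finset.powersetCard_succ_insert hnot, Finset.sum_union hdisj,
    Finset.sum_image ?_]
  · congr 1
    rw [Finset.mul_sum]
    refine Finset.sum_congr rfl fun T hT => ?_
    have hm1 : (m + 1) ∉ T := fun hc => hnot ((Finset.mem_powersetCard.mp hT).1 hc)
    rw [Finset.prod_insert hm1]
  · intro t ht t' ht' heq
    have h1 : (m + 1) ∉ t := fun hc => hnot ((Finset.mem_powersetCard.mp ht).1 hc)
    have h2 : (m + 1) ∉ t' := fun hc => hnot ((Finset.mem_powersetCard.mp ht').1 hc)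
    rw [← Finset.erase_insert h1, ← Finset.erase_insert h2, heq]

def Dp (r : ℕ) (x y : K3) : K3 :=
  qfact (r - 1) * ((qv - 1) * x - y) ^ (r - 1) /
    ∏ a ∈ Finset.Icc 1 r, (x + qint (a - 1) * y)

lemma sum_Icc_one (m : ℕ) (f : ℕ → K3) :
    ∑ r ∈ Finset.Icc 1 m, f r = ∑ s ∈ Finset.range m, f (s + 1) := by
  rw [← Finset.Ico_add_one_right_eq_Icc, Finset.sum_Ico_eq_sum_range]
  exact Finset.sum_congr rfl fun i _ => by rw [Nat.add_comm]

lemma Kfun_eq (m : ℕ) (x y : K3) :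
    Kfun m x y = ∑ s ∈ Finset.range m, Dp (s + 1) x y * (qv ^ (m * (s + 1)))⁻¹ * Ee m (s + 1) := by
  rw [Kfun, sum_Icc_one]
  refine Finset.sum_congr rfl fun s _ => ?_
  rw [Dp, Ee]
  ring

lemma Dp_one (x y : K3) : Dp 1 x y = x⁻¹ := by
  rw [Dp]
  simp [qfact, qint_zero, Finset.Icc_self, one_div]

lemma prod_shift (r : ℕ) (x y : K3) :
    ∏ a ∈ Finset.Icc 1 (r + 1), (x + qint (a - 1) * y)
      = x * ∏ a ∈ Finset.Icc 1 r, (x + qint a * y) := by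
  induction r with
  | zero => simp [qint_zero]
  | succ r ih =>
    rw [Finset.prod_Icc_succ_top (by omega), ih, Finset.prod_Icc_succ_top (by omega)]
    simp only [Nat.add_sub_cancel]
    ring

lemma Dp_shift (r : ℕ) (x y : K3) :
    Dp r (x + y) (qv * y)
      = qfact (r - 1) * ((qv - 1) * x - y) ^ (r - 1) /
          ∏ a ∈ Finset.Icc 1 r, (x + qint a * y) := by
  rw [Dp]
  have h1 : (qv - 1) * (x + y) - qv * y = (qv - 1) * x - y := by ring
  rw [h1]
  congr 1
  refine Finset.prod_congr rfl fun a ha => ?_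
  have ha1 : 1 ≤ a := (Finset.mem_Icc.mp ha).1
  have h2 : a - 1 + 1 = a := by omega
  rw [← h2, qint_succ, h2]
  ring

lemma term_key (r : ℕ) (x y : K3) (h : ∀ n, x + qint n * y ≠ 0) :
    Dp (r + 1) x y + Dp (r + 2) x y = qv ^ (r + 1) * Dp (r + 1) (x + y) (qv * y) := by
  have hx : x ≠ 0 := by have := h 0; rwa [qint_zero, zero_mul, add_zero] at this
  have hF : ∏ a ∈ Finset.Icc 1 (r + 1), (x + qint (a - 1) * y) ≠ 0 :=
    Finset.prod_ne_zero_iff.mpr fun a _ => h (a - 1)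
  have hG : ∏ a ∈ Finset.Icc 1 (r + 1), (x + qint a * y) ≠ 0 :=
    Finset.prod_ne_zero_iff.mpr fun a _ => h a
  have hc : x + qint (r + 1) * y ≠ 0 := h (r + 1)
  have hFG : ∏ a ∈ Finset.Icc 1 (r + 2), (x + qint (a - 1) * y)
      = x * ∏ a ∈ Finset.Icc 1 (r + 1), (x + qint a * y) := prod_shift (r + 1) x y
  have hF2 : ∏ a ∈ Finset.Icc 1 (r + 2), (x + qint (a - 1) * y)
      = (∏ a ∈ Finset.Icc 1 (r + 1), (x + qint (a - 1) * y)) * (x + qint (r + 1) * y) := by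
    rw [Finset.prod_Icc_succ_top (by omega)]
    norm_num
  have hq : qfact (r + 2 - 1) = qfact (r + 1 - 1) * qint (r + 1) := by
    simp only [Nat.add_sub_cancel]
    exact Finset.prod_range_succ _ r
  have hkey : (x + qint (r + 1) * y) + qint (r + 1) * ((qv - 1) * x - y) = qv ^ (r + 1) * x := by
    rw [qpow_eq (r + 1)]; ring
  rw [Dp, Dp, Dp_shift, hF2, hq]
  simp only [Nat.add_sub_cancel]
  rw [show r + 2 - 1 = r + 1 from rfl, pow_succ]
  have hxG : x * ∏ a ∈ Finset.Icc 1 (r + 1), (x + qint a * y)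
      = (∏ a ∈ Finset.Icc 1 (r + 1), (x + qint (a - 1) * y)) * (x + qint (r + 1) * y) :=
    hFG.symm.trans hF2
  rw [div_add_div _ _ hF (mul_ne_zero hF hc), mul_div_assoc',
    div_eq_div_iff (mul_ne_zero hF (mul_ne_zero hF hc)) hG]
  linear_combination
    (qfact r * ((qv - 1) * x - y) ^ r * (∏ a ∈ Finset.Icc 1 (r + 1), (x + qint (a - 1) * y)) *
        ∏ a ∈ Finset.Icc 1 (r + 1), (x + qint a * y)) * hkey +
      (qv ^ (r + 1) * qfact r * ((qv - 1) * x - y) ^ r *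
        ∏ a ∈ Finset.Icc 1 (r + 1), (x + qint (a - 1) * y)) * hxG

lemma step (m : ℕ) (x y : K3) (h : ∀ n, x + qint n * y ≠ 0) :
    Kfun (m + 1) x y = x⁻¹ + Kfun m (x + y) (qv * y) := by
  have hterm : ∀ s : ℕ,
      Dp (s + 1) x y * (qv ^ ((m + 1) * (s + 1)))⁻¹ * Ee m (s + 1)
        + Dp (s + 1 + 1) x y * (qv ^ ((m + 1) * (s + 1 + 1)))⁻¹ * (qv ^ (m + 1) * Ee m (s + 1))
      = Dp (s + 1) (x + y) (qv * y) * (qv ^ (m * (s + 1)))⁻¹ * Ee m (s + 1) := by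
    intro s
    have h1 : (qv ^ ((m + 1) * (s + 2)))⁻¹ * qv ^ (m + 1) = (qv ^ ((m + 1) * (s + 1)))⁻¹ := by
      rw [show (m + 1) * (s + 2) = (m + 1) * (s + 1) + (m + 1) by ring, pow_add, mul_inv,
        mul_assoc, inv_mul_cancel₀ (pow_ne_zero _ qv_ne), mul_one]
    have h2 : qv ^ (s + 1) * (qv ^ ((m + 1) * (s + 1)))⁻¹ = (qv ^ (m * (s + 1)))⁻¹ := by
      have hp : qv ^ ((m + 1) * (s + 1)) = qv ^ (m * (s + 1)) * qv ^ (s + 1) := by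
        rw [← pow_add]
        congr 1
        ring
      rw [hp, mul_inv, mul_comm (qv ^ (m * (s + 1)))⁻¹, ← mul_assoc,
        mul_inv_cancel₀ (pow_ne_zero _ qv_ne), one_mul]
    linear_combination (qv ^ ((m + 1) * (s + 1)))⁻¹ * Ee m (s + 1) * term_key s x y h
      + Dp (s + 2) x y * Ee m (s + 1) * h1
      + Dp (s + 1) (x + y) (qv * y) * Ee m (s + 1) * h2
  rw [Kfun_eq, Kfun_eq]
  have hsplit : ∀ s : ℕ, Dp (s + 1) x y * (qv ^ ((m + 1) * (s + 1)))⁻¹ * Ee (m + 1) (s + 1)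
      = Dp (s + 1) x y * (qv ^ ((m + 1) * (s + 1)))⁻¹ * Ee m (s + 1)
        + Dp (s + 1) x y * (qv ^ ((m + 1) * (s + 1)))⁻¹ * (qv ^ (m + 1) * Ee m s) := by
    intro s
    rw [Ee_succ]
    ring
  rw [Finset.sum_congr rfl fun s _ => hsplit s, Finset.sum_add_distrib,
    Finset.sum_range_succ, Ee_top (Nat.lt_succ_self m), mul_zero,
    add_zero, Finset.sum_range_succ']
  have hB0 : Dp (0 + 1) x y * (qv ^ ((m + 1) * (0 + 1)))⁻¹ * (qv ^ (m + 1) * Ee m 0) = x⁻¹ := by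
    rw [Ee_zero, Dp_one, mul_one, Nat.zero_add, Nat.mul_one, mul_assoc,
      inv_mul_cancel₀ (pow_ne_zero _ qv_ne), mul_one]
  rw [hB0]
  have hcomb : (∑ s ∈ Finset.range m, Dp (s + 1) x y * (qv ^ ((m + 1) * (s + 1)))⁻¹ * Ee m (s + 1))
      + ∑ s ∈ Finset.range m,
          Dp (s + 1 + 1) x y * (qv ^ ((m + 1) * (s + 1 + 1)))⁻¹ * (qv ^ (m + 1) * Ee m (s + 1))
      = ∑ s ∈ Finset.range m, Dp (s + 1) (x + y) (qv * y) * (qv ^ (m * (s + 1)))⁻¹ * Ee m (s + 1) := by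
    rw [← Finset.sum_add_distrib]
    exact Finset.sum_congr rfl fun s _ => hterm s
  linear_combination hcomb

lemma main_lemma (m : ℕ) : ∀ x y : K3, (∀ n, x + qint n * y ≠ 0) →
    Kfun m x y = ∑ a ∈ Finset.range m, (x + qint a * y)⁻¹ := by
  induction m with
  | zero => intro x y _; simp [Kfun]
  | succ m ih =>
    intro x y h
    have h' : ∀ n, (x + y) + qint n * (qv * y) ≠ 0 := by
      intro n
      have hh := h (n + 1)
      rw [qint_succ] at hh
      have heq : (x + y) + qint n * (qv * y) = x + (1 + qv * qint n) * y := by ring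
      rw [heq]
      exact hh
    rw [step m x y h, ih (x + y) (qv * y) h', Finset.sum_range_succ']
    have h0 : (x + qint 0 * y)⁻¹ = x⁻¹ := by rw [qint_zero, zero_mul, add_zero]
    rw [h0]
    rw [add_comm]
    congr 1
    refine Finset.sum_congr rfl fun a _ => ?_
    rw [qint_succ]
    ring_nf


/-- for m ≥ 1, K_m(x,y) = ∑_{a=0}^{m-1} 1/(x + [a]y). -/
theorem stmt4 (m : ℕ) (hm : 1 ≤ m) :
    Kfun m xv yv = ∑ a ∈ Finset.range m, (xv + qint a * yv)⁻¹ :=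
  main_lemma m xv yv hne

end
end

section
/- Let W be the Weyl group of type A_{k−1} acting on V = ℝ^k by permuting coordinates, with positive roots α_{ij} = ε_i − ε_j for i < j. For v ∈ V let I(v) := {a ∈ R^+ : a(v) < 0} and let w_v denote the unique shortest element of W such that w_v·v lies in the closed fundamental chamber. If v, v' ∈ V satisfy I(v) ⊆ I(v'), then w_{v'} = w_{w_v·v'} · w_v and ℓ(w_{v'}) = ℓ(w_{w_v·v'}) + ℓ(w_v), where ℓ denotes the Coxeter length. -/
/-- `σ` is the unique shortest permutation moving `v` into the closed fundamental
chamber; it is characterized by `I(v) = R⁺ ∩ σ⁻¹R⁻`, i.e. for every positive root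
`α_{ij} = ε_i − ε_j` (with `i < j`): `α_{ij}(v) < 0 ↔ σ(α_{ij}) ∈ R⁻`. -/
def IsChamberPerm {k : ℕ} (σ : Equiv.Perm (Fin k)) (v : Fin k → ℝ) : Prop :=
  ∀ i j : Fin k, i < j → (v i < v j ↔ σ j < σ i)

/-- the Coxeter length of a permutation, i.e. its number of inversions -/
def permLength {k : ℕ} (σ : Equiv.Perm (Fin k)) : ℕ :=
  (Finset.univ.filter fun p : Fin k × Fin k => p.1 < p.2 ∧ σ p.2 < σ p.1).card

lemma perm_eq_of_inversions {k : ℕ} {τ ρ : Equiv.Perm (Fin k)}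
    (h : ∀ i j : Fin k, i < j → (τ j < τ i ↔ ρ j < ρ i)) : τ = ρ := by
  have hsm : StrictMono (fun a => τ (ρ⁻¹ a)) := by
    intro a b hab
    set i := ρ⁻¹ a with hi
    set j := ρ⁻¹ b with hj
    have hij : i ≠ j := by
      intro he; rw [hi, hj] at he; exact hab.ne (ρ⁻¹.injective he)
    have hρi : ρ i = a := by simp [hi]
    have hρj : ρ j = b := by simp [hj]
    rcases lt_or_gt_of_ne hij with hlt | hgt
    · have := (h i j hlt).not
      simp only [hρi, hρj, not_lt] at this
      have hle := this.mpr hab.le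
      exact lt_of_le_of_ne hle (fun he => hij (τ.injective he))
    · have := (h j i hgt).mpr (by rw [hρi, hρj]; exact hab)
      exact this
  have hrange : Set.range (fun a => τ (ρ⁻¹ a)) = Set.range (id : Fin k → Fin k) := by
    rw [Set.range_id]
    exact (τ.surjective.comp ρ⁻¹.surjective).range_eq
  have inst : WellFoundedLT (Fin k) := inferInstance
  have : (fun a => τ (ρ⁻¹ a)) = (id : Fin k → Fin k) :=
    (@StrictMono.range_inj (Fin k) (Fin k) _ _ inst _ _ hsm strictMono_id).mp hrange
  apply Equiv.ext
  intro x
  have := congrFun this (ρ x)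
  simpa using this

/-- if `I(v) ⊆ I(v')` then `w_{v'} = w_{w_v·v'} · w_v` and
`ℓ(w_{v'}) = ℓ(w_{w_v·v'}) + ℓ(w_v)`.  Here the action is `(w·u) i = u (w⁻¹ i)`,
`I(u) = {α_{ij} : i < j, u i < u j}`, and `σ, σ', σ''` are the shortest elements
`w_v, w_{v'}, w_{w_v·v'}` respectively. -/
theorem stmt13 {k : ℕ} (v v' : Fin k → ℝ) (σ σ' σ'' : Equiv.Perm (Fin k))
    (hσ : IsChamberPerm σ v) (hσ' : IsChamberPerm σ' v')
    (hσ'' : IsChamberPerm σ'' fun i => v' (σ⁻¹ i))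
    (hI : ∀ i j : Fin k, i < j → v i < v j → v' i < v' j) :
    σ' = σ'' * σ ∧ permLength σ' = permLength σ'' + permLength σ := by
  -- key fact for inversions of σ
  have key2 : ∀ i j : Fin k, i < j → σ j < σ i → σ'' (σ j) < σ'' (σ i) := by
    intro i j hij hs
    have hv : v i < v j := (hσ i j hij).mpr hs
    have hv' : v' i < v' j := hI i j hij hv
    have h2 := hσ'' (σ j) (σ i) hs
    simp only [Equiv.Perm.coe_inv, Equiv.symm_apply_apply] at h2
    have hne : σ'' (σ j) ≠ σ'' (σ i) := fun he =>
      hij.ne (σ.injective (σ''.injective he)).symm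
    rcases lt_or_gt_of_ne hne with h | h
    · exact h
    · exact absurd (h2.mpr h) (not_lt.mpr hv'.le)
  have hch : ∀ i j : Fin k, i < j → (v' i < v' j ↔ (σ'' * σ) j < (σ'' * σ) i) := by
    intro i j hij
    simp only [Equiv.Perm.mul_apply]
    have hne : σ i ≠ σ j := fun he => hij.ne (σ.injective he)
    rcases lt_or_gt_of_ne hne with h | h
    · have := hσ'' (σ i) (σ j) h
      simpa using this
    · constructor
      · intro _; exact key2 i j hij h
      · intro _
        exact hI i j hij ((hσ i j hij).mpr h)
  have heq : σ' = σ'' * σ := by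
    apply perm_eq_of_inversions
    intro i j hij
    rw [← hσ' i j hij, hch i j hij]
  refine ⟨heq, ?_⟩
  -- length additivity
  have key2' : ∀ a b : Fin k, a < b → σ'' b < σ'' a → σ⁻¹ a < σ⁻¹ b := by
    intro a b hab hinv
    have hne : σ⁻¹ a ≠ σ⁻¹ b := fun he => hab.ne (σ⁻¹.injective he)
    rcases lt_or_gt_of_ne hne with h | h
    · exact h
    · exfalso
      have := key2 (σ⁻¹ b) (σ⁻¹ a) h (by simpa using hab)
      simp only [Equiv.Perm.coe_inv, Equiv.apply_symm_apply] at this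
      exact absurd this (not_lt.mpr hinv.le)
  classical
  set S₁ : Finset (Fin k × Fin k) :=
    Finset.univ.filter fun p => p.1 < p.2 ∧ σ p.2 < σ p.1 with hS₁
  set S₂ : Finset (Fin k × Fin k) :=
    Finset.univ.filter fun p => p.1 < p.2 ∧ σ p.1 < σ p.2 ∧ σ'' (σ p.2) < σ'' (σ p.1) with hS₂
  have hunion : (Finset.univ.filter fun p : Fin k × Fin k =>
      p.1 < p.2 ∧ σ' p.2 < σ' p.1) = S₁ ∪ S₂ := by
    ext p
    simp only [hS₁, hS₂, Finset.mem_union, Finset.mem_filter, Finset.mem_univ, true_and, heq,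
      Equiv.Perm.mul_apply]
    constructor
    · rintro ⟨h12, hinv⟩
      rcases lt_or_gt_of_ne (fun he : σ p.1 = σ p.2 => h12.ne (σ.injective he)) with h | h
      · exact Or.inr ⟨h12, h, hinv⟩
      · exact Or.inl ⟨h12, h⟩
    · rintro (⟨h12, h⟩ | ⟨h12, _, hinv⟩)
      · exact ⟨h12, key2 _ _ h12 h⟩
      · exact ⟨h12, hinv⟩
  have hdisj : Disjoint S₁ S₂ := by
    rw [Finset.disjoint_left]
    rintro p hp1 hp2
    simp only [hS₁, hS₂, Finset.mem_filter] at hp1 hp2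
    exact absurd hp2.2.2.1 (not_lt.mpr hp1.2.2.le)
  have hcard2 : S₂.card = permLength σ'' := by
    unfold permLength
    apply Finset.card_bij (fun p _ => (σ p.1, σ p.2))
    · rintro p hp
      simp only [hS₂, Finset.mem_filter] at hp
      simp only [Finset.mem_filter, Finset.mem_univ, true_and]
      exact ⟨hp.2.2.1, hp.2.2.2⟩
    · rintro p hp q hq h
      have h1 := congrArg Prod.fst h
      have h2 := congrArg Prod.snd h
      simp only at h1 h2
      exact Prod.ext (σ.injective h1) (σ.injective h2)
    · rintro q hq
      simp only [Finset.mem_filter, Finset.mem_univ, true_and] at hq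
      refine ⟨(σ⁻¹ q.1, σ⁻¹ q.2), ?_, ?_⟩
      · simp only [hS₂, Finset.mem_filter, Finset.mem_univ, true_and,
          Equiv.Perm.coe_inv, Equiv.apply_symm_apply]
        exact ⟨key2' q.1 q.2 hq.1 hq.2, hq.1, hq.2⟩
      · simp
  have hcard1 : S₁.card = permLength σ := rfl
  have : permLength σ' = S₁.card + S₂.card := by
    unfold permLength
    rw [hunion, Finset.card_union_of_disjoint hdisj]
  rw [this, hcard1, hcard2, Nat.add_comm]
end

section
/- Let x ∈ ℤ^k and for 1 ≤ j ≤ k define d_j^+(x) := #{p : j < p ≤ k, x_j = x_p} and d_j^-(x) := #{p : 1 ≤ p < j, x_p = x_j}. Then for any q, ∑_{j=1}^{k} [d_j^+(x)] = ∑_{j=1}^{k} q^{d_j^-(x)} d_j^+(x), where [n] := 1 + q + ⋯ + q^{n-1} is the q-integer. -/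
/-- d_j^+(x) := #{p : j < p ≤ k, x_j = x_p} -/
def dplus {k : ℕ} (x : Fin k → ℤ) (j : Fin k) : ℕ :=
  (Finset.univ.filter fun p : Fin k => j < p ∧ x j = x p).card

/-- d_j^-(x) := #{p : 1 ≤ p < j, x_p = x_j} -/
def dminus {k : ℕ} (x : Fin k → ℤ) (j : Fin k) : ℕ :=
  (Finset.univ.filter fun p : Fin k => p < j ∧ x p = x j).card

lemma lemA1 {R : Type*} [CommRing R] (q : R) {α : Type*} [LinearOrder α]
    (S : Finset α) :
    ∑ j ∈ S, q ^ (S.filter (fun p => p < j)).card = ∑ a ∈ Finset.range S.card, q ^ a := by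
  generalize hn : S.card = n
  induction n generalizing S with
  | zero => simp [Finset.card_eq_zero.mp hn]
  | succ n ih =>
    have h : S.Nonempty := Finset.card_pos.mp (by omega)
    set m := S.min' h with hm
    have hmS : m ∈ S := S.min'_mem h
    have hcard : (S.erase m).card = n := by
      rw [Finset.card_erase_of_mem hmS, hn]
      omega
    have h1 : (S.filter (fun p => p < m)) = ∅ := by
      apply Finset.filter_eq_empty_iff.mpr
      intro p hp
      exact not_lt.mpr (S.min'_le p hp)
    have h2 : ∀ j ∈ S.erase m, (S.filter (fun p => p < j)).card
        = ((S.erase m).filter (fun p => p < j)).card + 1 := by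
      intro j hj
      have hjm : m < j := lt_of_le_of_ne (S.min'_le j (Finset.mem_of_mem_erase hj))
        (Ne.symm (Finset.ne_of_mem_erase hj))
      have hins : S.filter (fun p => p < j) = insert m ((S.erase m).filter (fun p => p < j)) := by
        ext p
        simp only [Finset.mem_filter, Finset.mem_insert, Finset.mem_erase]
        constructor
        · rintro ⟨hpS, hpj⟩
          by_cases hpm : p = m
          · exact Or.inl hpm
          · exact Or.inr ⟨⟨hpm, hpS⟩, hpj⟩
        · rintro (rfl | ⟨⟨_, hpS⟩, hpj⟩)
          · exact ⟨hmS, hjm⟩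
          · exact ⟨hpS, hpj⟩
      rw [hins, Finset.card_insert_of_notMem]
      simp [Finset.mem_filter]
    rw [← Finset.add_sum_erase S _ hmS, h1]
    rw [Finset.sum_congr rfl (fun j hj => by rw [h2 j hj])]
    simp only [pow_succ, Finset.card_empty, pow_zero]
    rw [← Finset.sum_mul, ih (S.erase m) hcard, geom_sum_succ]
    ring

lemma lemA2 {R : Type*} [CommRing R] (q : R) {α : Type*} [LinearOrder α]
    (S : Finset α) :
    ∑ j ∈ S, q ^ (S.filter (fun p => j < p)).card = ∑ a ∈ Finset.range S.card, q ^ a := by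
  generalize hn : S.card = n
  induction n generalizing S with
  | zero => simp [Finset.card_eq_zero.mp hn]
  | succ n ih =>
    have h : S.Nonempty := Finset.card_pos.mp (by omega)
    set m := S.max' h with hm
    have hmS : m ∈ S := S.max'_mem h
    have hcard : (S.erase m).card = n := by
      rw [Finset.card_erase_of_mem hmS, hn]
      omega
    have h1 : (S.filter (fun p => m < p)) = ∅ := by
      apply Finset.filter_eq_empty_iff.mpr
      intro p hp
      exact not_lt.mpr (S.le_max' p hp)
    have h2 : ∀ j ∈ S.erase m, (S.filter (fun p => j < p)).card
        = ((S.erase m).filter (fun p => j < p)).card + 1 := by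
      intro j hj
      have hjm : j < m := lt_of_le_of_ne (S.le_max' j (Finset.mem_of_mem_erase hj))
        (Finset.ne_of_mem_erase hj)
      have hins : S.filter (fun p => j < p) = insert m ((S.erase m).filter (fun p => j < p)) := by
        ext p
        simp only [Finset.mem_filter, Finset.mem_insert, Finset.mem_erase]
        constructor
        · rintro ⟨hpS, hpj⟩
          by_cases hpm : p = m
          · exact Or.inl hpm
          · exact Or.inr ⟨⟨hpm, hpS⟩, hpj⟩
        · rintro (rfl | ⟨⟨_, hpS⟩, hpj⟩)
          · exact ⟨hmS, hjm⟩
          · exact ⟨hpS, hpj⟩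
      rw [hins, Finset.card_insert_of_notMem]
      simp [Finset.mem_filter]
    rw [← Finset.add_sum_erase S _ hmS, h1]
    rw [Finset.sum_congr rfl (fun j hj => by rw [h2 j hj])]
    simp only [pow_succ, Finset.card_empty, pow_zero]
    rw [← Finset.sum_mul, ih (S.erase m) hcard, geom_sum_succ]
    ring

lemma main_aux {R : Type*} [CommRing R] (q : R) : ∀ (k : ℕ) (x : Fin k → ℤ),
    ∑ j : Fin k, ∑ a ∈ Finset.range (dplus x j), q ^ a =
      ∑ j : Fin k, q ^ dminus x j * (dplus x j : R) := by
  intro k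
  induction k with
  | zero => intro x; simp
  | succ k ih =>
    intro x
    set y : Fin k → ℤ := fun j => x j.castSucc with hy
    set S : Finset (Fin k) :=
      Finset.univ.filter (fun j => x j.castSucc = x (Fin.last k)) with hS
    have hplus : ∀ j : Fin k, dplus x j.castSucc
        = dplus y j + (if x j.castSucc = x (Fin.last k) then 1 else 0) := by
      intro j
      rw [dplus, dplus, Finset.card_filter, Finset.card_filter, Fin.sum_univ_castSucc]
      simp [Fin.castSucc_lt_castSucc_iff, Fin.castSucc_lt_last, hy]
    have hminus : ∀ j : Fin k, dminus x j.castSucc = dminus y j := by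
      intro j
      rw [dminus, dminus, Finset.card_filter, Finset.card_filter, Fin.sum_univ_castSucc]
      have : ¬ (Fin.last k < j.castSucc) := by
        exact not_lt.mpr (Fin.le_last _)
      simp [Fin.castSucc_lt_castSucc_iff, this, hy]
    have hplast : dplus x (Fin.last k) = 0 := by
      rw [dplus, Finset.card_eq_zero, Finset.filter_eq_empty_iff]
      intro p _
      simp [not_lt.mpr (Fin.le_last p)]
    have hkey : ∑ j ∈ S, q ^ dplus y j = ∑ j ∈ S, q ^ dminus y j := by
      have e1 : ∀ j ∈ S, dplus y j = (S.filter (fun p => j < p)).card := by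
        intro j hj
        rw [hS] at hj
        have hjx : x j.castSucc = x (Fin.last k) := (Finset.mem_filter.mp hj).2
        rw [dplus]
        congr 1
        ext p
        simp only [Finset.mem_filter, Finset.mem_univ, true_and, hS, hy]
        constructor
        · rintro ⟨h1, h2⟩; exact ⟨by rw [← h2, hjx], h1⟩
        · rintro ⟨h1, h2⟩; exact ⟨h2, by rw [h1, hjx]⟩
      have e2 : ∀ j ∈ S, dminus y j = (S.filter (fun p => p < j)).card := by
        intro j hj
        rw [hS] at hj
        have hjx : x j.castSucc = x (Fin.last k) := (Finset.mem_filter.mp hj).2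
        rw [dminus]
        congr 1
        ext p
        simp only [Finset.mem_filter, Finset.mem_univ, true_and, hS, hy]
        constructor
        · rintro ⟨h1, h2⟩; exact ⟨by rw [h2, hjx], h1⟩
        · rintro ⟨h1, h2⟩; exact ⟨h2, by rw [h1, hjx]⟩
      calc ∑ j ∈ S, q ^ dplus y j
          = ∑ j ∈ S, q ^ (S.filter (fun p => j < p)).card :=
            Finset.sum_congr rfl (fun j hj => by rw [e1 j hj])
        _ = ∑ a ∈ Finset.range S.card, q ^ a := lemA2 q S
        _ = ∑ j ∈ S, q ^ (S.filter (fun p => p < j)).card := (lemA1 q S).symm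
        _ = ∑ j ∈ S, q ^ dminus y j :=
            Finset.sum_congr rfl (fun j hj => by rw [e2 j hj])
    rw [Fin.sum_univ_castSucc, Fin.sum_univ_castSucc, hplast]
    simp only [Finset.range_zero, Finset.sum_empty, Nat.cast_zero, mul_zero, add_zero]
    have L : ∀ j : Fin k, ∑ a ∈ Finset.range (dplus x j.castSucc), q ^ a
        = ∑ a ∈ Finset.range (dplus y j), q ^ a
          + (if x j.castSucc = x (Fin.last k) then q ^ dplus y j else 0) := by
      intro j
      rw [hplus j]
      by_cases hc : x j.castSucc = x (Fin.last k)
      · simp [hc, Finset.sum_range_succ]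
      · simp [hc]
    have Rr : ∀ j : Fin k, q ^ dminus x j.castSucc * (dplus x j.castSucc : R)
        = q ^ dminus y j * (dplus y j : R)
          + (if x j.castSucc = x (Fin.last k) then q ^ dminus y j else 0) := by
      intro j
      rw [hplus j, hminus j]
      by_cases hc : x j.castSucc = x (Fin.last k)
      · simp [hc, mul_add]
      · simp [hc]
    rw [Finset.sum_congr rfl (fun j _ => L j), Finset.sum_congr rfl (fun j _ => Rr j),
      Finset.sum_add_distrib, Finset.sum_add_distrib, ih y, ← Finset.sum_filter,
      ← Finset.sum_filter, ← hS, hkey]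

/-- ∑_{j=1}^{k} [d_j^+(x)] = ∑_{j=1}^{k} q^{d_j^-(x)} d_j^+(x),
where [n] := 1 + q + ⋯ + q^{n-1}. -/
theorem stmt14 {R : Type*} [CommRing R] (q : R) {k : ℕ} (x : Fin k → ℤ) :
    ∑ j : Fin k, ∑ a ∈ Finset.range (dplus x j), q ^ a =
      ∑ j : Fin k, q ^ dminus x j * (dplus x j : R) := by
  exact main_aux q k x
end

section
/- Fix a commutative ring R containing parameters α, β, γ, δ, and the Laurent polynomial ring P = R[e^{±v_1}, ..., e^{±v_k}]. Define operators on P acting from the right: P·X̌_i := e^{−v_i}·P, and P·Ť_i := P.s_i + ((α e^{v_i} + β)(γ e^{v_{i+1}} + δ)/(e^{v_i} − e^{v_{i+1}}))(P − P.s_i), where s_i swaps e^{v_i} and e^{v_{i+1}}. Then the operators Ť_i satisfy the quadratic relation (Ť_i − 1)(Ť_i + q) = 0 with q := 1 + βγ − αδ. -/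
noncomputable section

/-- the Laurent polynomial ring R[e^{±v_1}, ..., e^{±v_k}], realized as the group
algebra of the lattice ℤ^k over R -/
abbrev Laur (R : Type*) [CommRing R] (k : ℕ) : Type _ := AddMonoidAlgebra R (Fin k → ℤ)

/-- the monomial e^{v} for an exponent vector v ∈ ℤ^k -/
def expMono {R : Type*} [CommRing R] {k : ℕ} (v : Fin k → ℤ) : Laur R k :=
  AddMonoidAlgebra.single v 1

/-- the additive automorphism of ℤ^k exchanging the coordinates i and j -/
def swapAdd {k : ℕ} (i j : Fin k) : (Fin k → ℤ) ≃+ (Fin k → ℤ) where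
  toFun f := f ∘ Equiv.swap i j
  invFun f := f ∘ Equiv.swap i j
  left_inv f := by ext l; simp
  right_inv f := by ext l; simp
  map_add' _ _ := rfl

/-- the algebra automorphism `P ↦ P.s_i` exchanging `e^{v_i}` and `e^{v_{i+1}}` -/
def sOp (R : Type*) [CommRing R] {k : ℕ} (i j : Fin k) : Laur R k ≃ₐ[R] Laur R k :=
  AddMonoidAlgebra.domCongr R R (swapAdd i j)

-- regularity
lemma keyReg {R : Type*} [CommRing R] {k : ℕ} {w : Fin k → ℤ} {i : Fin k} (hw : 0 < w i)
    (f : Laur R k) (h : (AddMonoidAlgebra.single w 1 - 1) * f = 0) : f = 0 := by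
  by_contra hf
  obtain ⟨b, hb, hmax⟩ := Finset.exists_max_image f.coeff.support (fun g => g i)
    (Finsupp.support_nonempty_iff.mpr (fun h => hf (AddMonoidAlgebra.coeff_eq_zero.mp h)))
  have hbw : f.coeff (b + w) = 0 := by
    by_contra hne
    have := hmax _ (Finsupp.mem_support_iff.mpr hne)
    simp only [Pi.add_apply] at this
    omega
  have h0 : ((AddMonoidAlgebra.single w 1 - 1 : Laur R k) * f).coeff (b + w) = 0 := by rw [h]; rfl
  rw [sub_mul, one_mul, AddMonoidAlgebra.coeff_sub, Finsupp.sub_apply,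
    AddMonoidAlgebra.coeff_single_mul_apply] at h0
  have hb' : -w + (b + w) = b := by abel
  rw [hb'] at h0
  simp only [one_mul, hbw, sub_zero] at h0
  exact Finsupp.mem_support_iff.mp hb h0

lemma sX {R : Type*} [CommRing R] {k : ℕ} (i j : Fin k) :
    sOp R i j (expMono (Pi.single i 1)) = expMono (Pi.single j 1) := by
  rw [sOp, expMono, expMono, AddMonoidAlgebra.domCongr_single]
  congr 1
  ext l
  simp only [swapAdd, AddEquiv.coe_mk, Equiv.coe_fn_mk, Function.comp_apply]
  simp [Pi.single_apply, Equiv.swap_apply_eq_iff, Equiv.swap_apply_left]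

lemma ssOp {R : Type*} [CommRing R] {k : ℕ} (i j : Fin k) (P : Laur R k) :
    sOp R i j (sOp R i j P) = P := by
  ext a
  simp only [sOp, AddMonoidAlgebra.coeff_domCongr]
  congr 1
  ext l
  simp [swapAdd, Equiv.swap_apply_self]

end
noncomputable section
lemma sY {R : Type*} [CommRing R] {k : ℕ} (i j : Fin k) :
    sOp R i j (expMono (Pi.single j 1)) = expMono (Pi.single i 1) := by
  rw [sOp, expMono, expMono, AddMonoidAlgebra.domCongr_single]
  congr 1
  ext l
  simp only [swapAdd, AddEquiv.coe_mk, Equiv.coe_fn_mk, Function.comp_apply]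
  simp [Pi.single_apply, Equiv.swap_apply_eq_iff, Equiv.swap_apply_right]

lemma cancelD {R : Type*} [CommRing R] {k : ℕ} {i j : Fin k} (hij : i ≠ j) {Z : Laur R k}
    (h : (expMono (Pi.single i 1) - expMono (Pi.single j 1)) * Z = 0) : Z = 0 := by
  set w : Fin k → ℤ := Pi.single i 1 - Pi.single j 1 with hw
  have hwi : 0 < w i := by
    simp [hw, Pi.sub_apply, Pi.single_apply, hij, (by rintro rfl; exact hij rfl : j ≠ i)]
  have hx : (AddMonoidAlgebra.single w (1:R)) * expMono (Pi.single j 1) =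
      expMono (Pi.single i 1) := by
    rw [expMono, expMono, AddMonoidAlgebra.single_mul_single, one_mul]
    congr 1
    rw [hw]; abel
  have h1 : (AddMonoidAlgebra.single w (1:R) - 1) * (expMono (Pi.single j 1) * Z) = 0 := by
    calc (AddMonoidAlgebra.single w (1:R) - 1) * (expMono (Pi.single j 1) * Z)
        = ((AddMonoidAlgebra.single w (1:R)) * expMono (Pi.single j 1)
            - expMono (Pi.single j 1)) * Z := by ring
      _ = 0 := by rw [hx, h]
  have h2 := keyReg hwi _ h1
  have hy : expMono (R := R) (k := k) (-(Pi.single j 1)) * expMono (Pi.single j 1) = 1 := by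
    rw [expMono, expMono, AddMonoidAlgebra.single_mul_single, one_mul, neg_add_cancel,
      AddMonoidAlgebra.one_def]
  calc Z = (expMono (R := R) (-(Pi.single j 1)) * expMono (Pi.single j 1)) * Z := by
        rw [hy, one_mul]
    _ = expMono (R := R) (-(Pi.single j 1)) * (expMono (Pi.single j 1) * Z) := by ring
    _ = 0 := by rw [h2, mul_zero]

/-- the operators Ť_i satisfy (Ť_i − 1)(Ť_i + q) = 0 with
q = 1 + βγ − αδ.  Since `P·Ť_i := P.s_i + ((αe^{v_i}+β)(γe^{v_{i+1}}+δ)/(e^{v_i}−e^{v_{i+1}}))(P − P.s_i)`,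
the values `Q = P·Ť_i` and `Q2 = (P·Ť_i)·Ť_i` are characterized by the two
hypotheses below (multiplying the defining formula by `e^{v_i} − e^{v_{i+1}}`),
and the quadratic relation reads `Q2 = (1−q)Q + qP`. -/
theorem stmt15 {R : Type*} [CommRing R] (α β γ δ : R) {k : ℕ}
    (i j : Fin k) (hij : (j : ℕ) = (i : ℕ) + 1)
    (P Q Q2 : Laur R k)
    (hQ : (expMono (Pi.single i 1) - expMono (Pi.single j 1)) * Q =
      (expMono (Pi.single i 1) - expMono (Pi.single j 1)) * sOp R i j P +
        (algebraMap R (Laur R k) α * expMono (Pi.single i 1) + algebraMap R (Laur R k) β) *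
          (algebraMap R (Laur R k) γ * expMono (Pi.single j 1) + algebraMap R (Laur R k) δ) *
          (P - sOp R i j P))
    (hQ2 : (expMono (Pi.single i 1) - expMono (Pi.single j 1)) * Q2 =
      (expMono (Pi.single i 1) - expMono (Pi.single j 1)) * sOp R i j Q +
        (algebraMap R (Laur R k) α * expMono (Pi.single i 1) + algebraMap R (Laur R k) β) *
          (algebraMap R (Laur R k) γ * expMono (Pi.single j 1) + algebraMap R (Laur R k) δ) *
          (Q - sOp R i j Q)) :
    Q2 = (1 - algebraMap R (Laur R k) (1 + β * γ - α * δ)) * Q +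
      algebraMap R (Laur R k) (1 + β * γ - α * δ) * P := by
  have hij' : i ≠ j := by intro h; rw [h] at hij; omega
  have hq : algebraMap R (Laur R k) (1 + β * γ - α * δ) =
      1 + algebraMap R (Laur R k) β * algebraMap R (Laur R k) γ
        - algebraMap R (Laur R k) α * algebraMap R (Laur R k) δ := by
    rw [map_sub, map_add, map_mul, map_mul, map_one]
  rw [hq]
  have e2 := congrArg (sOp R i j) hQ
  simp only [map_mul, map_sub, map_add, sX, sY, ssOp, AlgEquiv.commutes] at e2
  set x : Laur R k := expMono (Pi.single i 1) with hxdef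
  set y : Laur R k := expMono (Pi.single j 1) with hydef
  set a : Laur R k := algebraMap R (Laur R k) α
  set b : Laur R k := algebraMap R (Laur R k) β
  set c : Laur R k := algebraMap R (Laur R k) γ
  set d : Laur R k := algebraMap R (Laur R k) δ
  set sP := sOp R i j P
  set sQ := sOp R i j Q
  have key : (x - y) * ((x - y) * (Q2 - ((1 - (1 + b * c - a * d)) * Q
      + (1 + b * c - a * d) * P))) = 0 := by
    linear_combination (x - y) * hQ2 + ((a*x+b)*(c*y+d) - (a*d - b*c)*(x-y)) * hQ
      + ((a*x+b)*(c*y+d) - (x-y)) * e2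
  have hz := cancelD hij' (cancelD hij' key)
  exact sub_eq_zero.mp hz
end
end

section
/- With the divided-difference-type operators Ť_i and multiplication operators X̌_i as defined (acting on Laurent polynomials in e^{v_1},...,e^{v_k} from the right), the deformed commutation relation holds: X̌_{i+1}Ť_i − Ť_iX̌_i = (α + βX̌_i)(γ + δX̌_{i+1}), i.e., for every Laurent polynomial P, (P·X̌_{i+1})·Ť_i − (P·Ť_i)·X̌_i = ((P·(α + βX̌_i))·(γ + δX̌_{i+1})). -/
noncomputable section

/-- the operator X̌_l : P ↦ e^{−v_l}·P -/
def XOp {R : Type*} [CommRing R] {k : ℕ} (l : Fin k) (P : Laur R k) : Laur R k :=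
  expMono (-(Pi.single l 1)) * P


lemma shift_inv_zero {R : Type*} [CommRing R] {k : ℕ} {d : Fin k → ℤ} (hd : d ≠ 0)
    (f : Laur R k) (hf : ∀ x, f.coeff (d + x) = f.coeff x) : f = 0 := by
  by_contra h
  obtain ⟨l, hl⟩ := Function.ne_iff.mp hd
  simp only [Pi.zero_apply] at hl
  have hsupp : f.coeff.support.Nonempty :=
    Finsupp.support_nonempty_iff.mpr (mt AddMonoidAlgebra.coeff_eq_zero.mp h)
  have hne : (f.coeff.support.image (fun x => x l)).Nonempty := hsupp.image _
  obtain ⟨x, hx, hxl⟩ := Finset.mem_image.mp ((f.coeff.support.image (fun x => x l)).max'_mem hne)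
  have hmem : ∀ y ∈ f.coeff.support, y l ≤ x l := by
    intro y hy
    rw [hxl]
    exact Finset.le_max' _ (y l) (Finset.mem_image.mpr ⟨y, hy, rfl⟩)
  rcases lt_or_gt_of_ne hl with h1 | h1
  · have hx' : f.coeff (x - d) ≠ 0 := by
      have h2 := hf (x - d); rw [add_sub_cancel] at h2
      rw [← h2]; exact Finsupp.mem_support_iff.mp hx
    have := hmem _ (Finsupp.mem_support_iff.mpr hx')
    simp only [Pi.sub_apply] at this
    linarith
  · have hx' : f.coeff (d + x) ≠ 0 := by rw [hf]; exact Finsupp.mem_support_iff.mp hx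
    have := hmem _ (Finsupp.mem_support_iff.mpr hx')
    simp only [Pi.add_apply] at this
    linarith

lemma expMono_cancel {R : Type*} [CommRing R] {k : ℕ} {v w : Fin k → ℤ} (hvw : v ≠ w)
    {X Y : Laur R k}
    (h : (expMono v - expMono w) * X = (expMono v - expMono w) * Y) : X = Y := by
  have h0 : (expMono v - expMono w) * (X - Y) = 0 := by rw [mul_sub, h, sub_self]
  set f := X - Y with hf
  have h1 : expMono (R := R) v * f = expMono w * f := by
    rw [sub_mul, sub_eq_zero] at h0; exact h0
  have key : ∀ x, f.coeff ((v - w) + x) = f.coeff x := by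
    intro x
    have h2 : (expMono (R := R) v * f).coeff (v + x) = (expMono w * f).coeff (v + x) := by
      rw [h1]
    rw [expMono, expMono, AddMonoidAlgebra.coeff_single_mul_apply, AddMonoidAlgebra.coeff_single_mul_apply,
      one_mul, one_mul] at h2
    have e1 : -v + (v + x) = x := by abel
    have e2 : -w + (v + x) = (v - w) + x := by abel
    rw [e1, e2] at h2
    exact h2.symm
  have := shift_inv_zero (sub_ne_zero_of_ne hvw) f key
  exact sub_eq_zero.mp this

lemma expMono_mul {R : Type*} [CommRing R] {k : ℕ} (u w : Fin k → ℤ) :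
    expMono (R := R) u * expMono w = expMono (u + w) := by
  simp [expMono, AddMonoidAlgebra.single_mul_single]

lemma expMono_zero {R : Type*} [CommRing R] {k : ℕ} :
    expMono (R := R) (0 : Fin k → ℤ) = 1 := rfl

lemma swapAdd_single {k : ℕ} (i j : Fin k) (hij : i ≠ j) :
    swapAdd i j (Pi.single j (1 : ℤ)) = Pi.single i 1 := by
  funext l
  show (Pi.single j (1 : ℤ) : Fin k → ℤ) (Equiv.swap i j l) = (Pi.single i (1 : ℤ) : Fin k → ℤ) l
  rcases eq_or_ne l i with rfl | hli
  · rw [Equiv.swap_apply_left]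
    simp
  · rcases eq_or_ne l j with rfl | hlj
    · rw [Equiv.swap_apply_right]
      simp [hij.symm, Ne.symm hli]
    · rw [Equiv.swap_apply_of_ne_of_ne hli hlj]
      simp [Ne.symm hlj, Ne.symm hli]

lemma sOp_XOp {R : Type*} [CommRing R] {k : ℕ} (i j : Fin k) (hij : i ≠ j) (P : Laur R k) :
    sOp R i j (XOp j P) = expMono (-(Pi.single i 1)) * sOp R i j P := by
  rw [XOp, map_mul]
  congr 1
  show AddMonoidAlgebra.domCongr R R (swapAdd i j) (AddMonoidAlgebra.single _ 1) = _
  rw [AddMonoidAlgebra.domCongr_single, map_neg, swapAdd_single i j hij]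
  rfl

/-- the deformed commutation relation
X̌_{i+1}Ť_i − Ť_iX̌_i = (α + βX̌_i)(γ + δX̌_{i+1}) as operators acting from the right:
for every Laurent polynomial P, (P·X̌_{i+1})·Ť_i − (P·Ť_i)·X̌_i = (P·(α+βX̌_i))·(γ+δX̌_{i+1}).
Here `TP = P·Ť_i` and `T2 = (P·X̌_{i+1})·Ť_i` are characterized by the two hypotheses
below (the defining formula of Ť_i multiplied by `e^{v_i} − e^{v_{i+1}}`). -/
theorem stmt16 {R : Type*} [CommRing R] (α β γ δ : R) {k : ℕ}
    (i j : Fin k) (hij : (j : ℕ) = (i : ℕ) + 1)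
    (P TP T2 : Laur R k)
    (hTP : (expMono (Pi.single i 1) - expMono (Pi.single j 1)) * TP =
      (expMono (Pi.single i 1) - expMono (Pi.single j 1)) * sOp R i j P +
        (algebraMap R (Laur R k) α * expMono (Pi.single i 1) + algebraMap R (Laur R k) β) *
          (algebraMap R (Laur R k) γ * expMono (Pi.single j 1) + algebraMap R (Laur R k) δ) *
          (P - sOp R i j P))
    (hT2 : (expMono (Pi.single i 1) - expMono (Pi.single j 1)) * T2 =
      (expMono (Pi.single i 1) - expMono (Pi.single j 1)) * sOp R i j (XOp j P) +
        (algebraMap R (Laur R k) α * expMono (Pi.single i 1) + algebraMap R (Laur R k) β) *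
          (algebraMap R (Laur R k) γ * expMono (Pi.single j 1) + algebraMap R (Laur R k) δ) *
          (XOp j P - sOp R i j (XOp j P))) :
    T2 - XOp i TP =
      algebraMap R (Laur R k) γ *
          (algebraMap R (Laur R k) α * P + algebraMap R (Laur R k) β * XOp i P) +
        algebraMap R (Laur R k) δ *
          XOp j (algebraMap R (Laur R k) α * P + algebraMap R (Laur R k) β * XOp i P) := by
  have hne : i ≠ j := by
    intro h
    rw [h] at hij
    omega
  have hvw : (Pi.single i (1 : ℤ) : Fin k → ℤ) ≠ Pi.single j 1 := by
    intro h
    have h2 : (Pi.single i (1 : ℤ) : Fin k → ℤ) i = (Pi.single j (1 : ℤ) : Fin k → ℤ) i :=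
      congrFun h i
    rw [Pi.single_eq_same, Pi.single_eq_of_ne hne] at h2
    exact one_ne_zero h2
  apply expMono_cancel hvw
  have hA : expMono (R := R) (Pi.single i (1:ℤ)) * expMono (-(Pi.single i 1)) = 1 := by
    rw [expMono_mul]
    simp [expMono_zero]
  have hB : expMono (R := R) (Pi.single j (1:ℤ)) * expMono (-(Pi.single j 1)) = 1 := by
    rw [expMono_mul]
    simp [expMono_zero]
  have hS := sOp_XOp i j hne P
  simp only [XOp] at hT2 hS ⊢
  linear_combination (norm := ring_nf)
    hT2 - expMono (-(Pi.single i 1)) * hTP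
    + ((expMono (Pi.single i 1) - expMono (Pi.single j 1))
        - (algebraMap R (Laur R k) α * expMono (Pi.single i 1) + algebraMap R (Laur R k) β) *
          (algebraMap R (Laur R k) γ * expMono (Pi.single j 1) + algebraMap R (Laur R k) δ)) * hS
    + (-(algebraMap R (Laur R k) α * algebraMap R (Laur R k) γ * expMono (Pi.single j 1)
        + algebraMap R (Laur R k) α * algebraMap R (Laur R k) δ
        + algebraMap R (Laur R k) β * algebraMap R (Laur R k) γ
        + algebraMap R (Laur R k) β * algebraMap R (Laur R k) δ * expMono (-(Pi.single j 1)))) * P * hA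
    + ((algebraMap R (Laur R k) α * algebraMap R (Laur R k) γ * expMono (Pi.single i 1)
        + algebraMap R (Laur R k) α * algebraMap R (Laur R k) δ
        + algebraMap R (Laur R k) β * algebraMap R (Laur R k) γ
        + algebraMap R (Laur R k) β * algebraMap R (Laur R k) δ * expMono (-(Pi.single i 1)))) * P * hB


end
end

section
/- Let F be the space of functions f : ℤ^k → ℂ and define, for a_i(x) := x_i − x_{i+1} > 0, the operator (T̂_i f)(x) := αδ f(x) + (1+βγ) f(s_i x) + αγ ∑_{j=1}^{a_i(x)} f(s_i x + j a_i^∨ + v_{i+1}) + (αδ+βγ) ∑_{j=1}^{a_i(x)−1} f(s_i x + j a_i^∨) + βδ ∑_{j=0}^{a_i(x)−1} f(s_i x + j a_i^∨ − v_{i+1}), with (T̂_i f)(x) := f(x) when a_i(x) = 0, and the analogous formula with negated signs when a_i(x) < 0 (as in the paper). Then T̂_i satisfies the quadratic relation (T̂_i − 1)(T̂_i + q) = 0 on F, where q = 1 + βγ − αδ. -/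
noncomputable section

open Finset

/-- the operator T̂_i acting on functions f : ℤ^k → ℂ (the index i+1 is denoted j);
`a_i(x) = x_i − x_{i+1}`, `s_i x` swaps the coordinates i and i+1,
`a_i^∨ = v_i − v_{i+1}`. -/
def That {k : ℕ} (α β γ δ : ℂ) (i j : Fin k) (f : (Fin k → ℤ) → ℂ)
    (x : Fin k → ℤ) : ℂ :=
  let s : Fin k → ℤ := x ∘ Equiv.swap i j
  let av : Fin k → ℤ := fun l => if l = i then 1 else if l = j then -1 else 0
  let vj : Fin k → ℤ := Pi.single j 1
  let n : ℤ := x i - x j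
  if 0 < n then
    α * δ * f x + (1 + β * γ) * f s +
      α * γ * ∑ m ∈ Icc 1 n.toNat, f (s + m • av + vj) +
      (α * δ + β * γ) * ∑ m ∈ Icc 1 (n.toNat - 1), f (s + m • av) +
      β * δ * ∑ m ∈ range n.toNat, f (s + m • av - vj)
  else if n = 0 then f x
  else
    -(β * γ) * f x + (1 - α * δ) * f s -
      α * γ * ∑ m ∈ range (-n).toNat, f (s - m • av + vj) -
      (α * δ + β * γ) * ∑ m ∈ Icc 1 ((-n).toNat - 1), f (s - m • av) -
      β * δ * ∑ m ∈ Icc 1 (-n).toNat, f (s - m • av - vj)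

/-- signed interval sum over ℤ -/
def J (p q : ℤ) (f : ℤ → ℂ) : ℂ :=
  if p ≤ q then ∑ m ∈ Finset.Icc p q, f m else -∑ m ∈ Finset.Icc (q+1) (p-1), f m

lemma sum_Icc_top' {p q : ℤ} (f : ℤ → ℂ) (h : p ≤ q) :
    ∑ m ∈ Finset.Icc p q, f m = (∑ m ∈ Finset.Icc p (q-1), f m) + f q := by
  have h1 : Finset.Icc p q = insert q (Finset.Icc p (q-1)) := by
    ext m; simp only [Finset.mem_Icc, Finset.mem_insert]; omega
  rw [h1, Finset.sum_insert (by simp only [Finset.mem_Icc]; omega)]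
  ring

lemma sum_Icc_bot' {p q : ℤ} (f : ℤ → ℂ) (h : p ≤ q) :
    ∑ m ∈ Finset.Icc p q, f m = f p + ∑ m ∈ Finset.Icc (p+1) q, f m := by
  have h1 : Finset.Icc p q = insert p (Finset.Icc (p+1) q) := by
    ext m; simp only [Finset.mem_Icc, Finset.mem_insert]; omega
  rw [h1, Finset.sum_insert (by simp only [Finset.mem_Icc]; omega)]

lemma J_of_le {p q : ℤ} (f : ℤ → ℂ) (h : p ≤ q) : J p q f = ∑ m ∈ Finset.Icc p q, f m := by
  unfold J; rw [if_pos h]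

lemma J_of_gt {p q : ℤ} (f : ℤ → ℂ) (h : q < p) :
    J p q f = -∑ m ∈ Finset.Icc (q+1) (p-1), f m := by
  unfold J; rw [if_neg (by omega)]

lemma J_empty (p : ℤ) (f : ℤ → ℂ) : J p (p-1) f = 0 := by
  rw [J_of_gt f (by omega), Finset.Icc_eq_empty (by omega)]
  simp

lemma J_single (p : ℤ) (f : ℤ → ℂ) : J p p f = f p := by
  rw [J_of_le f le_rfl]; simp

lemma J_peel_right (p q : ℤ) (f : ℤ → ℂ) : J p (q+1) f = J p q f + f (q+1) := by
  rcases le_or_gt p (q+1) with h | h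
  · rcases le_or_gt p q with h2 | h2
    · rw [J_of_le f h, J_of_le f h2, sum_Icc_top' f h, show q + 1 - 1 = q by ring]
    · have hpq : p = q + 1 := by omega
      subst hpq
      rw [J_single, J_of_gt f (by omega), Finset.Icc_eq_empty (by omega)]
      simp
  · rw [J_of_gt f (by omega : q + 1 < p), J_of_gt f (by omega : q < p),
      sum_Icc_bot' f (by omega : q + 1 ≤ p - 1)]
    ring

lemma J_peel_left (p q : ℤ) (f : ℤ → ℂ) : J p q f = f p + J (p+1) q f := by
  rcases le_or_gt p q with h | h
  · rcases le_or_gt (p+1) q with h2 | h2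
    · rw [J_of_le f h, J_of_le f h2, sum_Icc_bot' f h]
    · have hpq : p = q := by omega
      subst hpq
      rw [J_single, J_of_gt f (by omega), Finset.Icc_eq_empty (by omega)]
      simp
  · rw [J_of_gt f (by omega : q < p), J_of_gt f (by omega : q < p + 1)]
    rcases le_or_gt (q+1) (p-1) with h2 | h2
    · rw [sum_Icc_top' f (by omega : q + 1 ≤ p + 1 - 1), show p + 1 - 1 - 1 = p - 1 by ring,
        show p + 1 - 1 = p by ring]
      ring
    · have : p = q + 1 := by omega
      subst this
      rw [Finset.Icc_eq_empty (by omega : ¬ (q+1 ≤ q+1-1))]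
      have e2 : Finset.Icc (q+1) (q+1+1-1) = {q+1} := by
        ext m; simp only [Finset.mem_Icc, Finset.mem_singleton]; omega
      rw [e2]
      simp

lemma J_rev (p q : ℤ) (f : ℤ → ℂ) : J p q f = -J (q+1) (p-1) f := by
  rcases lt_trichotomy p (q+1) with h | h | h
  · rw [J_of_le f (by omega), J_of_gt f (by omega),
      show p - 1 + 1 = p by ring, show q + 1 - 1 = q by ring]
    ring
  · subst h
    rw [J_of_gt f (by omega), J_of_gt f (by omega), Finset.Icc_eq_empty (by omega)]
    simp
  · rw [J_of_gt f (by omega), J_of_le f (by omega)]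

lemma sum_Icc_shift (p q c : ℤ) (f : ℤ → ℂ) :
    ∑ m ∈ Finset.Icc p q, f (m + c) = ∑ m ∈ Finset.Icc (p+c) (q+c), f m := by
  rw [← Finset.map_add_right_Icc, Finset.sum_map]
  rfl

lemma sum_Icc_neg (p q : ℤ) (f : ℤ → ℂ) :
    ∑ m ∈ Finset.Icc p q, f m = ∑ m ∈ Finset.Icc (-q) (-p), f (-m) := by
  refine Finset.sum_nbij' (fun m => -m) (fun m => -m) ?_ ?_ ?_ ?_ ?_ <;>
    intro a ha <;> simp only [Finset.mem_Icc] at * <;> try omega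
  simp

lemma J_shift (p q c : ℤ) (f : ℤ → ℂ) :
    J p q (fun m => f (m + c)) = J (p+c) (q+c) f := by
  rcases le_or_gt p q with h | h
  · rw [J_of_le _ h, J_of_le f (by omega), sum_Icc_shift]
  · rw [J_of_gt _ h, J_of_gt f (by omega), sum_Icc_shift,
      show q + 1 + c = q + c + 1 by ring, show p - 1 + c = p + c - 1 by ring]

lemma J_neg (p q : ℤ) (f : ℤ → ℂ) : J p q f = J (-q) (-p) (fun m => f (-m)) := by
  rcases le_or_gt p q with h | h
  · rw [J_of_le f h, J_of_le _ (by omega), sum_Icc_neg]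
  · rw [J_of_gt f h, J_of_gt _ (by omega), sum_Icc_neg (q+1) (p-1),
      show -(p-1) = -p + 1 by ring, show -(q+1) = -q - 1 by ring]

/-- the 2d version of the operator -/
def T2 (α β γ δ : ℂ) (h : ℤ → ℤ → ℂ) (a b : ℤ) : ℂ :=
  α*δ * h a b + (1+β*γ) * h b a
  + α*γ * J 1 (a-b) (fun m => h (b+m) (a-m+1))
  + (α*δ+β*γ) * J 1 (a-b-1) (fun m => h (b+m) (a-m))
  + β*δ * J 0 (a-b-1) (fun m => h (b+m) (a-m-1))

lemma J_10 (f : ℤ → ℂ) : J 1 0 f = 0 := by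
  have := J_empty 1 f; norm_num at this; exact this

lemma J_0neg1 (f : ℤ → ℂ) : J 0 (-1) f = 0 := by
  have := J_empty 0 f; norm_num at this; exact this

lemma J_1neg1 (f : ℤ → ℂ) : J 1 (-1) f = -f 0 := by
  rw [J_rev, show (-1:ℤ)+1 = 0 by ring, show (1:ℤ)-1 = 0 by ring, J_single]

lemma J_00 (f : ℤ → ℂ) : J 0 0 f = f 0 := J_single 0 f

lemma T2_diag (α β γ δ : ℂ) (h : ℤ → ℤ → ℂ) (a : ℤ) : T2 α β γ δ h a a = h a a := by
  unfold T2
  rw [show a - a = 0 by ring, show (0:ℤ) - 1 = -1 by ring, J_10, J_1neg1, J_0neg1]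
  norm_num
  ring

lemma T2_swap (α β γ δ : ℂ) (h : ℤ → ℤ → ℂ) (a b : ℤ) :
    T2 α β γ δ h a b + T2 α β γ δ h b a = h a b + h b a := by
  unfold T2
  have h1 : J 1 (b-a) (fun m => h (a+m) (b-m+1))
      = - J 1 (a-b) (fun m => h (b+m) (a-m+1)) := by
    have e : (fun m => h (a+m) (b-m+1))
        = (fun m => h (b+(m+(a-b))) (a-(m+(a-b))+1)) := by
      funext m; congr 1 <;> ring
    rw [e, J_shift 1 (b-a) (a-b) (fun l => h (b+l) (a-l+1)),
      J_rev ((1:ℤ)+(a-b)) (b-a+(a-b)),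
      show b-a+(a-b)+1 = 1 by ring, show (1:ℤ)+(a-b)-1 = a-b by ring]
  have h2 : J 1 (b-a-1) (fun m => h (a+m) (b-m))
      = - h b a - h a b - J 1 (a-b-1) (fun m => h (b+m) (a-m)) := by
    have e : (fun m => h (a+m) (b-m))
        = (fun m => h (b+(m+(a-b))) (a-(m+(a-b)))) := by
      funext m; congr 1 <;> ring
    rw [e, J_shift 1 (b-a-1) (a-b) (fun l => h (b+l) (a-l)),
      J_rev ((1:ℤ)+(a-b)) (b-a-1+(a-b)),
      show b-a-1+(a-b)+1 = 0 by ring, show (1:ℤ)+(a-b)-1 = a-b by ring,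
      J_peel_left 0 (a-b), show (0:ℤ)+1 = 1 by norm_num]
    have pr : J 1 (a-b) (fun l => h (b+l) (a-l))
        = J 1 (a-b-1) (fun l => h (b+l) (a-l)) + h a b := by
      have t := J_peel_right 1 (a-b-1) (fun l => h (b+l) (a-l))
      rw [show a-b-1+1 = a-b by ring] at t
      rw [t, show b+(a-b) = a by ring, show a-(a-b) = b by ring]
    rw [pr, show b+(0:ℤ) = b by ring, show a-(0:ℤ) = a by ring]
    ring
  have h3 : J 0 (b-a-1) (fun m => h (a+m) (b-m-1))
      = - J 0 (a-b-1) (fun m => h (b+m) (a-m-1)) := by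
    have e : (fun m => h (a+m) (b-m-1))
        = (fun m => h (b+(m+(a-b))) (a-(m+(a-b))-1)) := by
      funext m; congr 1 <;> ring
    rw [e, J_shift 0 (b-a-1) (a-b) (fun l => h (b+l) (a-l-1)),
      J_rev ((0:ℤ)+(a-b)) (b-a-1+(a-b)),
      show b-a-1+(a-b)+1 = 0 by ring, show (0:ℤ)+(a-b)-1 = a-b-1 by ring]
  rw [h1, h2, h3]
  ring

lemma T2_step (α β γ δ : ℂ) (h : ℤ → ℤ → ℂ) (a b : ℤ) :
    T2 α β γ δ h (a+1) (b-1) = T2 α β γ δ h a b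
      + (α*δ*(h (a+1) (b-1) - h a b) + (1+β*γ)*(h (b-1) (a+1) - h b a)
        + α*γ*(h b (a+1) + h (a+1) b) + (α*δ+β*γ)*(h b a + h a b)
        + β*δ*(h (b-1) a + h a (b-1))) := by
  unfold T2
  have s1 : J 1 (a-b) (fun m => h (b+m) (a-m+1))
      = J (1+1) (a-b+1) (fun l => h (b-1+l) (a+1-l+1)) := by
    have e : (fun m => h (b+m) (a-m+1)) = (fun m => h (b-1+(m+1)) (a+1-(m+1)+1)) := by
      funext m; congr 1 <;> ring
    rw [e, J_shift 1 (a-b) 1 (fun l => h (b-1+l) (a+1-l+1))]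
  have e1 : J 1 (a+1-(b-1)) (fun m => h (b-1+m) (a+1-m+1))
      = h b (a+1) + h (a+1) b + J 1 (a-b) (fun m => h (b+m) (a-m+1)) := by
    rw [J_peel_left 1 (a+1-(b-1)), show a+1-(b-1) = (a-b+1)+1 by ring,
      J_peel_right (1+1) (a-b+1), s1]
    rw [show b-1+(1:ℤ) = b by ring, show a+1-(1:ℤ)+1 = a+1 by ring,
      show b-1+(a-b+1+1) = a+1 by ring, show a+1-(a-b+1+1)+1 = b by ring]
    ring
  have s2 : J 1 (a-b-1) (fun m => h (b+m) (a-m))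
      = J (1+1) (a-b-1+1) (fun l => h (b-1+l) (a+1-l)) := by
    have e : (fun m => h (b+m) (a-m)) = (fun m => h (b-1+(m+1)) (a+1-(m+1))) := by
      funext m; congr 1 <;> ring
    rw [e, J_shift 1 (a-b-1) 1 (fun l => h (b-1+l) (a+1-l))]
  have e2 : J 1 (a+1-(b-1)-1) (fun m => h (b-1+m) (a+1-m))
      = h b a + h a b + J 1 (a-b-1) (fun m => h (b+m) (a-m)) := by
    rw [J_peel_left 1 (a+1-(b-1)-1), show a+1-(b-1)-1 = (a-b-1+1)+1 by ring,
      J_peel_right (1+1) (a-b-1+1), s2]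
    rw [show b-1+(1:ℤ) = b by ring, show a+1-(1:ℤ) = a by ring,
      show b-1+(a-b-1+1+1) = a by ring, show a+1-(a-b-1+1+1) = b by ring]
    ring
  have s3 : J 0 (a-b-1) (fun m => h (b+m) (a-m-1))
      = J (0+1) (a-b-1+1) (fun l => h (b-1+l) (a+1-l-1)) := by
    have e : (fun m => h (b+m) (a-m-1)) = (fun m => h (b-1+(m+1)) (a+1-(m+1)-1)) := by
      funext m; congr 1 <;> ring
    rw [e, J_shift 0 (a-b-1) 1 (fun l => h (b-1+l) (a+1-l-1))]
  have e3 : J 0 (a+1-(b-1)-1) (fun m => h (b-1+m) (a+1-m-1))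
      = h (b-1) a + h a (b-1) + J 0 (a-b-1) (fun m => h (b+m) (a-m-1)) := by
    rw [J_peel_left 0 (a+1-(b-1)-1), show a+1-(b-1)-1 = (a-b-1+1)+1 by ring,
      J_peel_right (0+1) (a-b-1+1), s3]
    rw [show b-1+(0:ℤ) = b-1 by ring, show a+1-(0:ℤ)-1 = a by ring,
      show b-1+(a-b-1+1+1) = a by ring, show a+1-(a-b-1+1+1)-1 = b-1 by ring]
    ring
  rw [e1, e2, e3]
  ring

lemma T2_one (α β γ δ : ℂ) (h : ℤ → ℤ → ℂ) (b : ℤ) :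
    T2 α β γ δ h (b+1) b = α*δ*h (b+1) b + (1+β*γ)*h b (b+1)
      + α*γ*h (b+1) (b+1) + β*δ*h b b := by
  unfold T2
  rw [show b+1-b = (1:ℤ) by ring, show (1:ℤ)-1 = 0 by ring,
    J_single 1, J_10, J_00]
  rw [show b+(1:ℤ) = b+1 by ring, show b+1-(1:ℤ)+1 = b+1 by ring,
    show b+(0:ℤ) = b by ring, show b+1-(0:ℤ)-1 = b by ring]
  ring

lemma T2_base1 (α β γ δ : ℂ) (h : ℤ → ℤ → ℂ) (b : ℤ) :
    T2 α β γ δ (T2 α β γ δ h) (b+1) b - (α*δ-β*γ) * T2 α β γ δ h (b+1) b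
      - (1+β*γ-α*δ) * h (b+1) b = 0 := by
  have t1 := T2_one α β γ δ (T2 α β γ δ h) b
  have t2 := T2_one α β γ δ h b
  have d1 := T2_diag α β γ δ h (b+1)
  have d2 := T2_diag α β γ δ h b
  have w := T2_swap α β γ δ h (b+1) b
  linear_combination t1 + (1+β*γ)*w + α*γ*d1 + β*δ*d2 - t2

lemma T2_key (α β γ δ : ℂ) (h : ℤ → ℤ → ℂ) (a b : ℤ) :
    T2 α β γ δ (T2 α β γ δ h) (a+1) (b-1) - (α*δ-β*γ) * T2 α β γ δ h (a+1) (b-1)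
        - (1+β*γ-α*δ) * h (a+1) (b-1)
      = T2 α β γ δ (T2 α β γ δ h) a b - (α*δ-β*γ) * T2 α β γ δ h a b
        - (1+β*γ-α*δ) * h a b := by
  have s1 := T2_step α β γ δ (T2 α β γ δ h) a b
  have s2 := T2_step α β γ δ h a b
  have s3 := T2_step α β γ δ h (b-1) (a+1)
  rw [show b-1+1 = b by ring, show a+1-1 = a by ring] at s3
  have w1 := T2_swap α β γ δ h b (a+1)
  have w2 := T2_swap α β γ δ h a b
  have w3 := T2_swap α β γ δ h (b-1) a
  linear_combination s1 + (β*γ)*s2 - (1+β*γ)*s3 + (α*γ)*w1 + (α*δ+β*γ)*w2 + (β*δ)*w3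

lemma T2_quad (α β γ δ : ℂ) (h : ℤ → ℤ → ℂ) (a b : ℤ) :
    T2 α β γ δ (T2 α β γ δ h) a b - (α*δ-β*γ) * T2 α β γ δ h a b
      - (1+β*γ-α*δ) * h a b = 0 := by
  suffices H : ∀ N : ℕ, ∀ a b : ℤ, (a-b).natAbs = N →
      T2 α β γ δ (T2 α β γ δ h) a b - (α*δ-β*γ) * T2 α β γ δ h a b
        - (1+β*γ-α*δ) * h a b = 0 from H _ a b rfl
  intro N
  induction N using Nat.strong_induction_on with
  | _ N ih =>
    intro a b hN
    rcases lt_trichotomy (a-b) 0 with hn | hn | hn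
    · -- negative: move up two
      rcases eq_or_lt_of_le (show a - b ≤ -1 by omega) with h1 | h2
      · -- a - b = -1 : a + 1 = b, use base at b-1? (a+1) - (b-1) = 1
        rw [← T2_key]
        have e : a + 1 = (b-1) + 1 := by omega
        rw [e, show b - 1 = (b-1) by rfl]
        exact T2_base1 α β γ δ h (b-1)
      · rw [← T2_key]
        exact ih ((a+1)-(b-1)).natAbs (by omega) (a+1) (b-1) rfl
    · -- zero
      have : a = b := by omega
      subst this
      rw [T2_diag, T2_diag]
      ring
    · rcases eq_or_lt_of_le (show (1:ℤ) ≤ a - b by omega) with h1 | h2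
      · have e : a = b + 1 := by omega
        subst e
        exact T2_base1 α β γ δ h b
      · have e1 : a = (a-1)+1 := by ring
        have e2 : b = (b+1)-1 := by ring
        rw [e1, e2, T2_key]
        exact ih ((a-1)-(b+1)).natAbs (by omega) (a-1) (b+1) rfl

lemma sum_cast (N M : ℕ) (F : ℤ → ℂ) :
    ∑ m ∈ Finset.Icc (N:ℤ) (M:ℤ), F m = ∑ m ∈ Finset.Icc N M, F (m:ℤ) := by
  refine Finset.sum_nbij' (fun m => m.toNat) (fun m => (m:ℤ)) ?_ ?_ ?_ ?_ ?_ <;>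
    intro a ha <;> simp only [Finset.mem_Icc] at * <;> try omega
  congr 1; omega

lemma Icc_zero_range (N : ℕ) (F : ℕ → ℂ) (hN : 1 ≤ N) :
    ∑ m ∈ Finset.Icc 0 (N-1), F m = ∑ m ∈ Finset.range N, F m := by
  apply Finset.sum_congr _ (fun _ _ => rfl)
  ext m; simp only [Finset.mem_Icc, Finset.mem_range]; omega

lemma Jcast_a (N : ℕ) (F : ℤ → ℂ) :
    J 1 (N:ℤ) F = ∑ m ∈ Finset.Icc 1 N, F (m:ℤ) := by
  rcases Nat.eq_zero_or_pos N with h | h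
  · subst h
    rw [show ((0:ℕ):ℤ) = 0 by norm_num, J_10]
    simp
  · rw [J_of_le F (by omega : (1:ℤ) ≤ (N:ℤ)), show (1:ℤ) = ((1:ℕ):ℤ) by norm_num,
      sum_cast 1 N]

lemma Jcast_b (N : ℕ) (F : ℤ → ℂ) :
    J 0 ((N:ℤ)-1) F = ∑ m ∈ Finset.range N, F (m:ℤ) := by
  rcases Nat.eq_zero_or_pos N with h | h
  · subst h
    rw [show ((0:ℕ):ℤ)-1 = -1 by norm_num, J_0neg1]
    simp
  · rw [J_of_le F (by omega : (0:ℤ) ≤ (N:ℤ)-1), show ((N:ℤ)-1) = ((N-1:ℕ):ℤ) by omega,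
      show (0:ℤ) = ((0:ℕ):ℤ) by norm_num, sum_cast 0 (N-1), Icc_zero_range N _ h]

lemma Jcast_c (N : ℕ) (F : ℤ → ℂ) :
    J 1 (-(N:ℤ)) F = -∑ m ∈ Finset.range N, F (-(m:ℤ)) := by
  rcases Nat.eq_zero_or_pos N with h | h
  · subst h
    rw [show (-((0:ℕ):ℤ)) = 0 by norm_num, J_10]
    simp
  · rw [J_of_gt F (by omega : -(N:ℤ) < 1), sum_Icc_neg,
      show (-(-(N:ℤ)+1)) = (N:ℤ)-1 by ring, show (-((1:ℤ)-1)) = 0 by norm_num,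
      show ((N:ℤ)-1) = ((N-1:ℕ):ℤ) by omega, show (0:ℤ) = ((0:ℕ):ℤ) by norm_num,
      sum_cast 0 (N-1), Icc_zero_range N _ h]

lemma Jcast_e (N : ℕ) (F : ℤ → ℂ) :
    J 0 (-(N:ℤ)-1) F = -∑ m ∈ Finset.Icc 1 N, F (-(m:ℤ)) := by
  rcases Nat.eq_zero_or_pos N with h | h
  · subst h
    rw [show (-((0:ℕ):ℤ)-1) = -1 by norm_num, J_0neg1]
    simp
  · rw [J_of_gt F (by omega : -(N:ℤ)-1 < 0), sum_Icc_neg,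
      show (-(-(N:ℤ)-1+1)) = (N:ℤ) by ring, show (-((0:ℤ)-1)) = 1 by norm_num,
      show (1:ℤ) = ((1:ℕ):ℤ) by norm_num, sum_cast 1 N]

lemma Jcast_d (N : ℕ) (F : ℤ → ℂ) (hN : 1 ≤ N) :
    J 1 (-(N:ℤ)-1) F = -F 0 - F (-(N:ℤ)) - ∑ m ∈ Finset.Icc 1 (N-1), F (-(m:ℤ)) := by
  rw [J_of_gt F (by omega : -(N:ℤ)-1 < 1), show (-(N:ℤ)-1+1) = -(N:ℤ) by ring,
    show ((1:ℤ)-1) = 0 by norm_num, sum_Icc_bot' F (by omega : -(N:ℤ) ≤ 0),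
    sum_Icc_top' F (by omega : -(N:ℤ)+1 ≤ 0), sum_Icc_neg,
    show (-((0:ℤ)-1)) = 1 by norm_num, show (-(-(N:ℤ)+1)) = (N:ℤ)-1 by ring,
    show ((N:ℤ)-1) = ((N-1:ℕ):ℤ) by omega, show (1:ℤ) = ((1:ℕ):ℤ) by norm_num,
    sum_cast 1 (N-1)]
  ring

def upd {k : ℕ} (i j : Fin k) (x : Fin k → ℤ) (u v : ℤ) : Fin k → ℤ :=
  fun l => if l = i then u else if l = j then v else x l

section pts
variable {k : ℕ} (i j : Fin k) (x : Fin k → ℤ)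

lemma upd_apply_i (hij : i ≠ j) (u v : ℤ) : upd i j x u v i = u := by simp [upd]

lemma upd_apply_j (hij : i ≠ j) (u v : ℤ) : upd i j x u v j = v := by
  simp [upd, hij.symm]

lemma upd_upd (hij : i ≠ j) (u v u' v' : ℤ) :
    upd i j (upd i j x u v) u' v' = upd i j x u' v' := by
  funext l
  by_cases h1 : l = i <;> by_cases h2 : l = j <;> simp [upd, h1, h2]

lemma upd_self (hij : i ≠ j) : upd i j x (x i) (x j) = x := by
  funext l
  by_cases h1 : l = i <;> by_cases h2 : l = j <;> simp [upd, h1, h2, hij.symm]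

lemma pt_swap (hij : i ≠ j) : x ∘ (Equiv.swap i j) = upd i j x (x j) (x i) := by
  funext l
  by_cases h1 : l = i <;> by_cases h2 : l = j <;>
    simp [upd, h1, h2, hij.symm, Equiv.swap_apply_left, Equiv.swap_apply_right,
      Equiv.swap_apply_of_ne_of_ne]

lemma pt_gen (hij : i ≠ j) (m t : ℤ) :
    (x ∘ (Equiv.swap i j)) + m • (fun l => if l = i then (1:ℤ) else if l = j then -1 else 0)
      + t • (Pi.single j 1 : Fin k → ℤ) = upd i j x (x j + m) (x i - m + t) := by
  funext l
  by_cases h1 : l = i <;> by_cases h2 : l = j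
  · exact absurd (h1 ▸ h2 ▸ rfl : i = j) hij
  · simp [upd, h1, h2, Equiv.swap_apply_left, Pi.single_apply, hij.symm]
  · simp [upd, h1, h2, hij.symm, Equiv.swap_apply_right, Pi.single_apply]
    ring
  · simp [upd, h1, h2, Equiv.swap_apply_of_ne_of_ne h1 h2, Pi.single_apply]

end pts

section pts2
variable {k : ℕ} (i j : Fin k) (x : Fin k → ℤ)

lemma pt_a (hij : i ≠ j) (m : ℕ) :
    (x ∘ (Equiv.swap i j)) + m • (fun l => if l = i then (1:ℤ) else if l = j then -1 else 0)
      + (Pi.single j 1 : Fin k → ℤ) = upd i j x (x j + (m:ℤ)) (x i - (m:ℤ) + 1) := by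
  have t := pt_gen i j x hij (m:ℤ) 1
  rw [one_smul, natCast_zsmul] at t
  exact t

lemma pt_b (hij : i ≠ j) (m : ℕ) :
    (x ∘ (Equiv.swap i j)) + m • (fun l => if l = i then (1:ℤ) else if l = j then -1 else 0)
      = upd i j x (x j + (m:ℤ)) (x i - (m:ℤ)) := by
  have t := pt_gen i j x hij (m:ℤ) 0
  rw [zero_smul, add_zero, natCast_zsmul, show x i - (m:ℤ) + 0 = x i - (m:ℤ) by ring] at t
  exact t

lemma pt_c (hij : i ≠ j) (m : ℕ) :
    (x ∘ (Equiv.swap i j)) + m • (fun l => if l = i then (1:ℤ) else if l = j then -1 else 0)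
      - (Pi.single j 1 : Fin k → ℤ) = upd i j x (x j + (m:ℤ)) (x i - (m:ℤ) - 1) := by
  have t := pt_gen i j x hij (m:ℤ) (-1)
  rw [neg_smul, one_smul, ← sub_eq_add_neg, natCast_zsmul,
    show x i - (m:ℤ) + (-1) = x i - (m:ℤ) - 1 by ring] at t
  exact t

lemma pt_d (hij : i ≠ j) (m : ℕ) :
    (x ∘ (Equiv.swap i j)) - m • (fun l => if l = i then (1:ℤ) else if l = j then -1 else 0)
      + (Pi.single j 1 : Fin k → ℤ) = upd i j x (x j + -(m:ℤ)) (x i - -(m:ℤ) + 1) := by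
  have t := pt_gen i j x hij (-(m:ℤ)) 1
  rw [one_smul, neg_smul, ← sub_eq_add_neg, natCast_zsmul] at t
  exact t

lemma pt_e (hij : i ≠ j) (m : ℕ) :
    (x ∘ (Equiv.swap i j)) - m • (fun l => if l = i then (1:ℤ) else if l = j then -1 else 0)
      = upd i j x (x j + -(m:ℤ)) (x i - -(m:ℤ)) := by
  have t := pt_gen i j x hij (-(m:ℤ)) 0
  rw [zero_smul, add_zero, neg_smul, ← sub_eq_add_neg, natCast_zsmul,
    show x i - -(m:ℤ) + 0 = x i - -(m:ℤ) by ring] at t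
  exact t

lemma pt_f (hij : i ≠ j) (m : ℕ) :
    (x ∘ (Equiv.swap i j)) - m • (fun l => if l = i then (1:ℤ) else if l = j then -1 else 0)
      - (Pi.single j 1 : Fin k → ℤ) = upd i j x (x j + -(m:ℤ)) (x i - -(m:ℤ) - 1) := by
  have t := pt_gen i j x hij (-(m:ℤ)) (-1)
  rw [neg_smul (1:ℤ), one_smul, ← sub_eq_add_neg, neg_smul, ← sub_eq_add_neg, natCast_zsmul,
    show x i - -(m:ℤ) + (-1) = x i - -(m:ℤ) - 1 by ring] at t
  exact t

end pts2

lemma That_eq {k : ℕ} (α β γ δ : ℂ) (i j : Fin k) (hij : i ≠ j)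
    (f : (Fin k → ℤ) → ℂ) (x : Fin k → ℤ) :
    That α β γ δ i j f x = T2 α β γ δ (fun u v => f (upd i j x u v)) (x i) (x j) := by
  have hsw := pt_swap i j x hij
  rcases lt_trichotomy (x i - x j) 0 with hn | hn | hn
  · -- negative case
    set N : ℕ := (-(x i - x j)).toNat with hNdef
    have hN : x i - x j = -(N:ℤ) := by omega
    have hN1 : 1 ≤ N := by omega
    simp only [That, T2]
    rw [if_neg (by omega), if_neg (by omega), hN, Jcast_c, Jcast_e, Jcast_d _ _ hN1,
      show (- -(N:ℤ)).toNat = N by omega]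
    have c1 : ∑ m ∈ Finset.range N,
        f (x ∘ (Equiv.swap i j) - m • (fun l => if l = i then (1:ℤ) else if l = j then -1 else 0)
          + Pi.single j 1)
        = ∑ m ∈ Finset.range N, f (upd i j x (x j + -(m:ℤ)) (x i - -(m:ℤ) + 1)) :=
      Finset.sum_congr rfl fun m _ => congrArg f (pt_d i j x hij m)
    have c2 : ∑ m ∈ Finset.Icc 1 (N-1),
        f (x ∘ (Equiv.swap i j) - m • (fun l => if l = i then (1:ℤ) else if l = j then -1 else 0))
        = ∑ m ∈ Finset.Icc 1 (N-1), f (upd i j x (x j + -(m:ℤ)) (x i - -(m:ℤ))) :=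
      Finset.sum_congr rfl fun m _ => congrArg f (pt_e i j x hij m)
    have c3 : ∑ m ∈ Finset.Icc 1 N,
        f (x ∘ (Equiv.swap i j) - m • (fun l => if l = i then (1:ℤ) else if l = j then -1 else 0)
          - Pi.single j 1)
        = ∑ m ∈ Finset.Icc 1 N, f (upd i j x (x j + -(m:ℤ)) (x i - -(m:ℤ) - 1)) :=
      Finset.sum_congr rfl fun m _ => congrArg f (pt_f i j x hij m)
    rw [c1, c2, c3, hsw,
      show x j + (0:ℤ) = x j by ring, show x i - (0:ℤ) = x i by ring,
      show x j + -(N:ℤ) = x i by omega, show x i - -(N:ℤ) = x j by omega,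
      upd_self i j x hij]
    ring
  · -- zero case
    have e : x i = x j := by omega
    simp only [That]
    rw [if_neg (by omega), if_pos hn, e, T2_diag]
    show f x = f (upd i j x (x j) (x j))
    have u := upd_self i j x hij
    rw [e] at u
    rw [u]
  · -- positive case
    set N : ℕ := (x i - x j).toNat with hNdef
    have hN : x i - x j = (N:ℤ) := by omega
    have hN1 : 1 ≤ N := by omega
    simp only [That, T2]
    rw [if_pos hn, hN, Jcast_a, Jcast_b, show ((N:ℤ)-1) = ((N-1:ℕ):ℤ) by omega, Jcast_a,
      show ((N:ℤ)).toNat = N by omega]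
    have c1 : ∑ m ∈ Finset.Icc 1 N,
        f (x ∘ (Equiv.swap i j) + m • (fun l => if l = i then (1:ℤ) else if l = j then -1 else 0)
          + Pi.single j 1)
        = ∑ m ∈ Finset.Icc 1 N, f (upd i j x (x j + (m:ℤ)) (x i - (m:ℤ) + 1)) :=
      Finset.sum_congr rfl fun m _ => congrArg f (pt_a i j x hij m)
    have c2 : ∑ m ∈ Finset.Icc 1 (N-1),
        f (x ∘ (Equiv.swap i j) + m • (fun l => if l = i then (1:ℤ) else if l = j then -1 else 0))
        = ∑ m ∈ Finset.Icc 1 (N-1), f (upd i j x (x j + (m:ℤ)) (x i - (m:ℤ))) :=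
      Finset.sum_congr rfl fun m _ => congrArg f (pt_b i j x hij m)
    have c3 : ∑ m ∈ Finset.range N,
        f (x ∘ (Equiv.swap i j) + m • (fun l => if l = i then (1:ℤ) else if l = j then -1 else 0)
          - Pi.single j 1)
        = ∑ m ∈ Finset.range N, f (upd i j x (x j + (m:ℤ)) (x i - (m:ℤ) - 1)) :=
      Finset.sum_congr rfl fun m _ => congrArg f (pt_c i j x hij m)
    rw [c1, c2, c3, hsw, upd_self i j x hij]

/-- the operator T̂_i satisfies the quadratic relation
(T̂_i − 1)(T̂_i + q) = 0, i.e. T̂_i² = (1−q)T̂_i + q, with q = 1 + βγ − αδ. -/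
theorem stmt17 {k : ℕ} (α β γ δ : ℂ) (i j : Fin k) (hij : (j : ℕ) = (i : ℕ) + 1)
    (f : (Fin k → ℤ) → ℂ) (x : Fin k → ℤ) :
    That α β γ δ i j (That α β γ δ i j f) x -
        (1 - (1 + β * γ - α * δ)) * That α β γ δ i j f x -
        (1 + β * γ - α * δ) * f x = 0 := by
  have hne : i ≠ j := by
    intro e
    subst e
    omega
  have e2 : (fun u v => That α β γ δ i j f (upd i j x u v))
      = (fun u v => T2 α β γ δ (fun u' v' => f (upd i j x u' v')) u v) := by
    funext u v
    rw [That_eq α β γ δ i j hne f (upd i j x u v), upd_apply_i i j x hne u v,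
      upd_apply_j i j x hne u v]
    have hg : (fun u' v' => f (upd i j (upd i j x u v) u' v'))
        = fun u' v' => f (upd i j x u' v') := by
      funext u' v'
      rw [upd_upd i j x hne u v u' v']
    rw [hg]
  rw [That_eq α β γ δ i j hne (That α β γ δ i j f) x, e2,
    That_eq α β γ δ i j hne f x]
  have q := T2_quad α β γ δ (fun u v => f (upd i j x u v)) (x i) (x j)
  rw [upd_self i j x hne] at q
  linear_combination q


end
end
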